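/- arXiv:1811.04515 — 2 statements merged into one kernel-verified Lean document; each statement's English description precedes it below -/
import Mathlib

section
/- Let Ω ⊂ ℝ^N be a bounded open set and g ∈ L¹(ℝ^N∖Ω). Then W^{s,2}_{Ω,g} is a Hilbert space: its norm ‖·‖_{W^{s,2}_{Ω,g}} is induced by an inner product, and every sequence in W^{s,2}_{Ω,g} that is Cauchy with respect to ‖·‖_{W^{s,2}_{Ω,g}} converges in this norm to an element of W^{s,2}_{Ω,g} (functions equal almost everywhere being identified). -/
open MeasureTheory Set Filter Topology
open scoped ENNReal

noncomputable section

/-- Euclidean space `ℝ^N`. -/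
abbrev RN (N : ℕ) := EuclideanSpace ℝ (Fin N)

/-- The normalizing constant `C_{N,s}`. -/
def Cns (N : ℕ) (s : ℝ) : ℝ :=
  s * 2 ^ (2 * s) * Real.Gamma ((2 * s + N) / 2) /
    (Real.pi ^ ((N : ℝ) / 2) * Real.Gamma (1 - s))

/-- The kernel denominator `|x-y|^{N+2s}`. -/
def Kden (N : ℕ) (s : ℝ) (x y : RN N) : ℝ := ‖x - y‖ ^ ((N : ℝ) + 2 * s)

/-- Extended-real squared Gagliardo seminorm of `u` over a set `A ⊆ ℝ^N × ℝ^N`. -/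
def gagE (N : ℕ) (s : ℝ) (A : Set (RN N × RN N)) (u : RN N → ℝ) : ℝ≥0∞ :=
  ∫⁻ p in A, ENNReal.ofReal ((u p.1 - u p.2) ^ 2 / Kden N s p.1 p.2)

/-- Bilinear Gagliardo form of `u, v` over `A ⊆ ℝ^N × ℝ^N` (Bochner integral). -/
def gagB (N : ℕ) (s : ℝ) (A : Set (RN N × RN N)) (u v : RN N → ℝ) : ℝ :=
  ∫ p in A, (u p.1 - u p.2) * (v p.1 - v p.2) / Kden N s p.1 p.2

/-- The set `Q := ℝ^{2N} ∖ (ℝ^N∖Ω)²`. -/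
def QSet {N : ℕ} (Ω : Set (RN N)) : Set (RN N × RN N) := (Ωᶜ ×ˢ Ωᶜ)ᶜ

/-- Membership in `W^{s,2}(ℝ^N)`. -/
def MemWs (N : ℕ) (s : ℝ) (u : RN N → ℝ) : Prop :=
  MemLp u 2 volume ∧ gagE N s univ u < ⊤

/-- Squared `W^{s,2}(ℝ^N)`-norm. -/
def WsNormSq (N : ℕ) (s : ℝ) (u : RN N → ℝ) : ℝ :=
  (∫ x, (u x) ^ 2) + (gagE N s univ u).toReal

/-- Membership in `W^{s,2}_0(Ω̄)`. -/
def MemWs0 (N : ℕ) (s : ℝ) (Ω : Set (RN N)) (u : RN N → ℝ) : Prop :=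
  MemWs N s u ∧ ∀ᵐ x ∂(volume.restrict Ωᶜ), u x = 0

/-- Squared `W^{s,2}_0(Ω̄)`-norm (the full Gagliardo seminorm). -/
def Ws0NormSq (N : ℕ) (s : ℝ) (u : RN N → ℝ) : ℝ := (gagE N s univ u).toReal

/-- Membership in `W^{s,2}(ℝ^N ∖ Ω)`. -/
def MemWsExt (N : ℕ) (s : ℝ) (Ω : Set (RN N)) (z : RN N → ℝ) : Prop :=
  MemLp z 2 (volume.restrict Ωᶜ) ∧ gagE N s (Ωᶜ ×ˢ Ωᶜ) z < ⊤

/-- Squared `W^{s,2}(ℝ^N ∖ Ω)`-norm. -/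
def WsExtNormSq (N : ℕ) (s : ℝ) (Ω : Set (RN N)) (z : RN N → ℝ) : ℝ :=
  (∫ x in Ωᶜ, (z x) ^ 2) + (gagE N s (Ωᶜ ×ˢ Ωᶜ) z).toReal

/-- The interaction operator (nonlocal normal derivative) `𝒩_s`. -/
def Iop (N : ℕ) (s : ℝ) (Ω : Set (RN N)) (u : RN N → ℝ) (x : RN N) : ℝ :=
  Cns N s * ∫ y in Ω, (u x - u y) / Kden N s x y

/-- `F` represents an element of the dual space `W^{-s,2}(Ω̄)` of `W^{s,2}_0(Ω̄)`. -/
structure MemDualWs0 (N : ℕ) (s : ℝ) (Ω : Set (RN N)) (F : (RN N → ℝ) → ℝ) : Prop where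
  congr : ∀ u v, MemWs0 N s Ω u → MemWs0 N s Ω v → u =ᵐ[volume] v → F u = F v
  map_add : ∀ u v, MemWs0 N s Ω u → MemWs0 N s Ω v → F (u + v) = F u + F v
  map_smul : ∀ (c : ℝ) u, MemWs0 N s Ω u → F (c • u) = c * F u
  bdd : ∃ M : ℝ, ∀ u, MemWs0 N s Ω u → |F u| ≤ M * Real.sqrt (Ws0NormSq N s u)

/-- Dual norm on `W^{-s,2}(Ω̄)`. -/
def dualNormWs0 (N : ℕ) (s : ℝ) (Ω : Set (RN N)) (F : (RN N → ℝ) → ℝ) : ℝ :=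
  sInf {M : ℝ | 0 ≤ M ∧ ∀ u, MemWs0 N s Ω u → |F u| ≤ M * Real.sqrt (Ws0NormSq N s u)}

/-- `Ω` has a Lipschitz continuous boundary: near every boundary point, after a rotation
(linear isometry), `Ω` is the region above the graph of a Lipschitz function. -/
def HasLipschitzBoundary {N : ℕ} (Ω : Set (RN N)) : Prop :=
  ∀ x ∈ frontier Ω, ∃ r : ℝ, 0 < r ∧
    ∃ (e : RN N ≃ₗᵢ[ℝ] RN N) (j : Fin N)
      (φ : ({ i : Fin N // i ≠ j } → ℝ) → ℝ) (L : NNReal),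
      LipschitzWith L φ ∧
        ∀ y ∈ Metric.ball x r, (y ∈ Ω ↔ φ (fun i => e y i.1) < e y j)

/-- Weak solution of the Dirichlet exterior value problem
`(−Δ)^s u = F in Ω`, `u = z in ℝ^N∖Ω`. -/
def IsWeakSolDirichlet (N : ℕ) (s : ℝ) (Ω : Set (RN N)) (F : (RN N → ℝ) → ℝ)
    (z u : RN N → ℝ) : Prop :=
  MemWs N s u ∧ (∀ᵐ x ∂(volume.restrict Ωᶜ), u x = z x) ∧
    ∀ v, MemWs0 N s Ω v → Cns N s / 2 * gagB N s univ u v = F v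

/-- `v ∈ V = {v ∈ W^{s,2}_0(Ω̄) : (−Δ)^s v ∈ L²(Ω)}` with fractional Laplacian `w`. -/
def IsFracLapOf (N : ℕ) (s : ℝ) (Ω : Set (RN N)) (v w : RN N → ℝ) : Prop :=
  MemWs0 N s Ω v ∧ MemLp w 2 (volume.restrict Ω) ∧
    ∀ φ, MemWs0 N s Ω φ → Cns N s / 2 * gagB N s univ v φ = ∫ x in Ω, w x * φ x

/-- Very-weak solution of the Dirichlet exterior value problem
`(−Δ)^s u = F in Ω`, `u = z in ℝ^N∖Ω`. -/
def IsVeryWeakSolDirichlet (N : ℕ) (s : ℝ) (Ω : Set (RN N)) (F : (RN N → ℝ) → ℝ)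
    (z u : RN N → ℝ) : Prop :=
  MemLp u 2 volume ∧ (∀ᵐ x ∂(volume.restrict Ωᶜ), u x = z x) ∧
    ∀ v w, IsFracLapOf N s Ω v w →
      ∫ x in Ω, u x * w x = F v - ∫ x in Ωᶜ, z x * Iop N s Ω v x

/-- Membership in `W^{s,2}_{Ω,g}`. -/
def MemWg (N : ℕ) (s : ℝ) (Ω : Set (RN N)) (g : RN N → ℝ) (u : RN N → ℝ) : Prop :=
  Measurable u ∧ (∫⁻ x in Ω, ENNReal.ofReal ((u x) ^ 2)) < ⊤ ∧
    (∫⁻ x in Ωᶜ, ENNReal.ofReal (|g x| * (u x) ^ 2)) < ⊤ ∧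
    gagE N s (QSet Ω) u < ⊤

/-- Squared `W^{s,2}_{Ω,g}`-norm. -/
def WgNormSq (N : ℕ) (s : ℝ) (Ω : Set (RN N)) (g : RN N → ℝ) (u : RN N → ℝ) : ℝ :=
  (∫ x in Ω, (u x) ^ 2) + (∫ x in Ωᶜ, |g x| * (u x) ^ 2) + (gagE N s (QSet Ω) u).toReal

/-- The measure `μ = κ dx` on `ℝ^N ∖ Ω`. -/
def muMeas {N : ℕ} (Ω : Set (RN N)) (κ : RN N → ℝ) : Measure (RN N) :=
  (volume.restrict Ωᶜ).withDensity fun x => ENNReal.ofReal (κ x)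

/-- Assumption (A) on the coefficient `κ`. -/
structure AssumpA {N : ℕ} (Ω : Set (RN N)) (κ : RN N → ℝ) : Prop where
  meas : Measurable κ
  nonneg : ∀ x, 0 ≤ κ x
  memL1 : IntegrableOn κ Ωᶜ
  memLinfty : ∃ Cb : ℝ, ∀ᵐ x ∂(volume.restrict Ωᶜ), κ x ≤ Cb
  cpt : IsCompact (tsupport κ)
  suppSubset : tsupport κ ⊆ Ωᶜ
  pos : ∀ᵐ x ∂(volume.restrict (tsupport κ)), 0 < κ x

/-- `F` represents an element of the dual space `(W^{s,2}_{Ω,κ})⋆`. -/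
structure MemDualWkap (N : ℕ) (s : ℝ) (Ω : Set (RN N)) (κ : RN N → ℝ)
    (F : (RN N → ℝ) → ℝ) : Prop where
  congr : ∀ u v, MemWg N s Ω κ u → MemWg N s Ω κ v → u =ᵐ[volume] v → F u = F v
  map_add : ∀ u v, MemWg N s Ω κ u → MemWg N s Ω κ v → F (u + v) = F u + F v
  map_smul : ∀ (c : ℝ) u, MemWg N s Ω κ u → F (c • u) = c * F u
  bdd : ∃ M : ℝ, ∀ u, MemWg N s Ω κ u → |F u| ≤ M * Real.sqrt (WgNormSq N s Ω κ u)

/-- Dual norm on `(W^{s,2}_{Ω,κ})⋆`. -/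
def dualNormWkap (N : ℕ) (s : ℝ) (Ω : Set (RN N)) (κ : RN N → ℝ)
    (F : (RN N → ℝ) → ℝ) : ℝ :=
  sInf {M : ℝ | 0 ≤ M ∧ ∀ u, MemWg N s Ω κ u → |F u| ≤ M * Real.sqrt (WgNormSq N s Ω κ u)}

/-- Weak solution of the Robin exterior value problem
`(−Δ)^s u = F in Ω`, `𝒩_s u + κ u = κ z in ℝ^N∖Ω`. -/
def IsWeakSolRobin (N : ℕ) (s : ℝ) (Ω : Set (RN N)) (κ : RN N → ℝ)
    (F : (RN N → ℝ) → ℝ) (z u : RN N → ℝ) : Prop :=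
  MemWg N s Ω κ u ∧
    ∀ v, MemWg N s Ω κ v →
      gagB N s (QSet Ω) u v + ∫ x in Ωᶜ, κ x * u x * v x =
        F v + ∫ x in Ωᶜ, κ x * z x * v x

/-- Weak solution of the regularized (Robin-penalized) problem with parameter `n`:
`(−Δ)^s u = 0 in Ω`, `𝒩_s u + nκ u = nκ z in ℝ^N∖Ω`. -/
def IsWeakSolPen (N : ℕ) (s : ℝ) (Ω : Set (RN N)) (κ : RN N → ℝ) (n : ℕ)
    (z u : RN N → ℝ) : Prop :=
  MemWg N s Ω κ u ∧ (∫⁻ x in Ωᶜ, ENNReal.ofReal ((u x) ^ 2)) < ⊤ ∧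
    ∀ v, MemWg N s Ω κ v → (∫⁻ x in Ωᶜ, ENNReal.ofReal ((v x) ^ 2)) < ⊤ →
      Cns N s / 2 * gagB N s (QSet Ω) u v + n * ∫ x in Ωᶜ, κ x * u x * v x =
        n * ∫ x in Ωᶜ, κ x * z x * v x

section Statement7Aux

open MeasureTheory

variable {α : Type*} [MeasurableSpace α]

private lemma abs_mul_le_half_sq (f g : ℝ) : ‖f * g‖ ≤ (f ^ 2 + g ^ 2) / 2 := by
  rw [Real.norm_eq_abs, abs_mul]
  nlinarith [sq_nonneg (|f| - |g|), sq_abs f, sq_abs g]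

private lemma memL2_integrable_mul {μ : Measure α} {f h : α → ℝ} (hf : MemLp f 2 μ)
    (hh : MemLp h 2 μ) : Integrable (fun x => f x * h x) μ :=
  ((hf.integrable_sq.add hh.integrable_sq).div_const 2).mono'
    (hf.aestronglyMeasurable.mul hh.aestronglyMeasurable)
    (ae_of_all _ fun _ => abs_mul_le_half_sq _ _)

private lemma memL2_of_lintegral_sq {μ : Measure α} {f : α → ℝ} (hm : AEStronglyMeasurable f μ)
    (h : (∫⁻ x, ENNReal.ofReal (f x ^ 2) ∂μ) < ⊤) : MemLp f 2 μ := by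
  rw [memLp_two_iff_integrable_sq hm]
  refine ⟨by simpa [pow_two] using (show AEStronglyMeasurable (fun x => f x * f x) μ from hm.mul hm), ?_⟩
  rwa [hasFiniteIntegral_iff_ofReal (ae_of_all _ fun x => sq_nonneg _)]

private lemma meas_sq {f : α → ℝ} (hf : Measurable f) : Measurable fun x => f x ^ 2 := by
  simpa [pow_two] using (show Measurable fun x => f x * f x from hf.mul hf)

private lemma aem_ofReal_sq {μ : Measure α} {f : α → ℝ} (hf : AEMeasurable f μ) :
    AEMeasurable (fun x => ENNReal.ofReal (f x ^ 2)) μ :=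
  ENNReal.measurable_ofReal.comp_aemeasurable (by simpa [pow_two] using (show AEMeasurable (fun x => f x * f x) μ from hf.mul hf))

private lemma ofReal_sq_sub_le (a b : ℝ) :
    ENNReal.ofReal ((a - b) ^ 2) ≤ 2 * ENNReal.ofReal (a ^ 2) + 2 * ENNReal.ofReal (b ^ 2) := by
  calc ENNReal.ofReal ((a - b) ^ 2) ≤ ENNReal.ofReal (2 * a ^ 2 + 2 * b ^ 2) :=
        ENNReal.ofReal_le_ofReal (by nlinarith [sq_nonneg (a + b)])
    _ = 2 * ENNReal.ofReal (a ^ 2) + 2 * ENNReal.ofReal (b ^ 2) := by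
        rw [ENNReal.ofReal_add (by positivity) (by positivity), ENNReal.ofReal_mul (by norm_num),
          ENNReal.ofReal_mul (by norm_num), ENNReal.ofReal_ofNat]

private lemma lintegral_weight_sq_sub_le {μ : Measure α} {W : α → ℝ≥0∞} {f h : α → ℝ}
    (hW : AEMeasurable W μ) (hf : AEMeasurable f μ) (hh : AEMeasurable h μ) :
    ∫⁻ x, W x * ENNReal.ofReal ((f x - h x) ^ 2) ∂μ ≤
      2 * ∫⁻ x, W x * ENNReal.ofReal (f x ^ 2) ∂μ +
        2 * ∫⁻ x, W x * ENNReal.ofReal (h x ^ 2) ∂μ := by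
  calc ∫⁻ x, W x * ENNReal.ofReal ((f x - h x) ^ 2) ∂μ
      ≤ ∫⁻ x, (2 * (W x * ENNReal.ofReal (f x ^ 2)) +
          2 * (W x * ENNReal.ofReal (h x ^ 2))) ∂μ := by
        refine lintegral_mono fun x => ?_
        calc W x * ENNReal.ofReal ((f x - h x) ^ 2)
            ≤ W x * (2 * ENNReal.ofReal (f x ^ 2) + 2 * ENNReal.ofReal (h x ^ 2)) :=
              mul_le_mul_right (ofReal_sq_sub_le _ _) _
          _ = 2 * (W x * ENNReal.ofReal (f x ^ 2)) + 2 * (W x * ENNReal.ofReal (h x ^ 2)) := by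
              ring
    _ = 2 * ∫⁻ x, W x * ENNReal.ofReal (f x ^ 2) ∂μ +
        2 * ∫⁻ x, W x * ENNReal.ofReal (h x ^ 2) ∂μ := by
        rw [lintegral_add_left' (show AEMeasurable (fun x => 2 * (W x * ENNReal.ofReal (f x ^ 2))) μ
            from ((hW.mul (aem_ofReal_sq hf)).const_mul 2)),
          lintegral_const_mul' 2 _ (by norm_num), lintegral_const_mul' 2 _ (by norm_num)]

private lemma fatou_cauchy {μ : Measure α} {f : ℕ → α → ℝ} {u : α → ℝ} {φ : ℕ → ℕ}
    (hφ : StrictMono φ) (hm : ∀ n, AEMeasurable (f n) μ)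
    (hae : ∀ᵐ x ∂μ, Filter.Tendsto (fun k => f (φ k) x) Filter.atTop (nhds (u x)))
    (hc : ∀ ε : ℝ, 0 < ε → ∃ M, ∀ m, M ≤ m → ∀ n, M ≤ n →
      ∫⁻ x, ENNReal.ofReal ((f m x - f n x) ^ 2) ∂μ ≤ ENNReal.ofReal ε) :
    ∀ ε : ℝ, 0 < ε → ∃ M, ∀ n, M ≤ n →
      ∫⁻ x, ENNReal.ofReal ((f n x - u x) ^ 2) ∂μ ≤ ENNReal.ofReal ε := by
  intro ε hε
  obtain ⟨M, hM⟩ := hc ε hε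
  refine ⟨M, fun n hn => ?_⟩
  have key : ∫⁻ x, ENNReal.ofReal ((f n x - u x) ^ 2) ∂μ =
      ∫⁻ x, Filter.liminf (fun k => ENNReal.ofReal ((f n x - f (φ k) x) ^ 2)) Filter.atTop ∂μ := by
    refine lintegral_congr_ae (hae.mono fun x hx => ?_)
    have ht : Filter.Tendsto (fun k => ENNReal.ofReal ((f n x - f (φ k) x) ^ 2)) Filter.atTop
        (nhds (ENNReal.ofReal ((f n x - u x) ^ 2))) :=
      (ENNReal.continuous_ofReal.tendsto _).comp ((tendsto_const_nhds.sub hx).pow 2)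
    exact ht.liminf_eq.symm
  rw [key]
  refine le_trans (lintegral_liminf_le' fun k =>
    aem_ofReal_sq ((hm n).sub (hm (φ k)))) ?_
  refine Filter.liminf_le_of_frequently_le' ?_
  refine (Filter.eventually_atTop.2 ⟨M, fun k hk => ?_⟩).frequently
  exact hM n hn (φ k) (le_trans hk hφ.le_apply)

private lemma ae_tendsto_of_fast_cauchy {μ : Measure α} {w : ℕ → α → ℝ}
    (hw : ∀ k, AEMeasurable (w k) μ)
    (h : ∀ k : ℕ, ∫⁻ x, ENNReal.ofReal ((w (k + 1) x - w k x) ^ 2) ∂μ ≤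
      ENNReal.ofReal ((16 : ℝ)⁻¹ ^ k)) :
    ∀ᵐ x ∂μ, ∃ l : ℝ, Filter.Tendsto (fun k => w k x) Filter.atTop (nhds l) := by
  set S : ℕ → Set α := fun k =>
    {x | ENNReal.ofReal ((4 : ℝ)⁻¹ ^ k) ≤ ENNReal.ofReal ((w (k + 1) x - w k x) ^ 2)} with hS
  have hSk : ∀ k, μ (S k) ≤ ENNReal.ofReal ((4 : ℝ)⁻¹ ^ k) := by
    intro k
    have hcheb := mul_meas_ge_le_lintegral₀
      (aem_ofReal_sq ((hw (k + 1)).sub (hw k))) (ENNReal.ofReal ((4 : ℝ)⁻¹ ^ k))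
    have h1 : ENNReal.ofReal ((4 : ℝ)⁻¹ ^ k) * μ (S k) ≤ ENNReal.ofReal ((16 : ℝ)⁻¹ ^ k) :=
      le_trans hcheb (h k)
    have h4pos : (0:ℝ) < (4 : ℝ)⁻¹ ^ k := by positivity
    have hne0 : ENNReal.ofReal ((4 : ℝ)⁻¹ ^ k) ≠ 0 := by
      simp [ENNReal.ofReal_eq_zero, not_le, h4pos]
    have hnetop : ENNReal.ofReal ((4 : ℝ)⁻¹ ^ k) ≠ ⊤ := ENNReal.ofReal_ne_top
    have h2 : μ (S k) ≤ ENNReal.ofReal ((16 : ℝ)⁻¹ ^ k) / ENNReal.ofReal ((4 : ℝ)⁻¹ ^ k) :=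
      (ENNReal.le_div_iff_mul_le (Or.inl hne0) (Or.inl hnetop)).2 (by rwa [mul_comm])
    refine le_trans h2 ?_
    rw [← ENNReal.ofReal_div_of_pos h4pos]
    refine ENNReal.ofReal_le_ofReal ?_
    rw [← div_pow]
    norm_num
  have hsum : (∑' k, μ (S k)) ≠ ⊤ := by
    refine ne_top_of_le_ne_top ?_ (ENNReal.tsum_le_tsum hSk)
    rw [← ENNReal.ofReal_tsum_of_nonneg (fun k => by positivity)
      (summable_geometric_of_lt_one (by norm_num) (by norm_num))]
    exact ENNReal.ofReal_ne_top
  filter_upwards [ae_finite_setOf_mem hsum] with x hx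
  have hbdd : ∃ K : ℕ, ∀ k, K ≤ k → x ∉ S k := by
    obtain ⟨K, hK⟩ := hx.bddAbove
    exact ⟨K + 1, fun k hk hmem => by
      have := hK hmem
      omega⟩
  obtain ⟨K, hK⟩ := hbdd
  have hdist : ∀ k, K ≤ k → |w (k + 1) x - w k x| ≤ (2 : ℝ)⁻¹ ^ k := by
    intro k hk
    have hx' := hK k hk
    rw [hS] at hx'
    simp only [Set.mem_setOf_eq, not_le] at hx'
    have hlt : (w (k + 1) x - w k x) ^ 2 < (4 : ℝ)⁻¹ ^ k := by
      by_contra hcon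
      push_neg at hcon
      exact absurd (ENNReal.ofReal_le_ofReal hcon) (not_le.2 hx')
    have h4 : ((2 : ℝ)⁻¹ ^ k) ^ 2 = (4 : ℝ)⁻¹ ^ k := by
      rw [← pow_mul, mul_comm, pow_mul]
      norm_num
    have := Real.sqrt_le_sqrt hlt.le
    rwa [Real.sqrt_sq_eq_abs, ← h4, Real.sqrt_sq (by positivity)] at this
  have hcs : CauchySeq (fun j => w (K + j) x) := by
    refine cauchySeq_of_le_geometric (2 : ℝ)⁻¹ ((2 : ℝ)⁻¹ ^ K) (by norm_num) fun j => ?_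
    rw [Real.dist_eq, abs_sub_comm, ← pow_add]
    exact hdist (K + j) (Nat.le_add_right _ _)
  obtain ⟨l, hl⟩ := cauchySeq_tendsto_of_complete hcs
  refine ⟨l, (Filter.tendsto_add_atTop_iff_nat K).1 ?_⟩
  simpa [add_comm] using hl

end Statement7Aux

section Statement7Aux2

open MeasureTheory

variable {N : ℕ} {s : ℝ} {Ω : Set (RN N)} {g : RN N → ℝ}

private lemma Kden_nonneg (N : ℕ) (s : ℝ) (x y : RN N) : 0 ≤ Kden N s x y :=
  Real.rpow_nonneg (norm_nonneg _) _

private lemma measurable_Kden (N : ℕ) {s : ℝ} (hs : 0 ≤ s) :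
    Measurable fun p : RN N × RN N => Kden N s p.1 p.2 := by
  unfold Kden
  exact ((Real.continuous_rpow_const
    (add_nonneg (Nat.cast_nonneg N) (by linarith))).comp
    ((continuous_fst.sub continuous_snd).norm)).measurable

private lemma ofReal_div_K (N : ℕ) (s : ℝ) (a : ℝ) (x y : RN N) :
    ENNReal.ofReal (a ^ 2 / Kden N s x y) =
      ENNReal.ofReal (Kden N s x y)⁻¹ * ENNReal.ofReal (a ^ 2) := by
  rw [← ENNReal.ofReal_mul (inv_nonneg.2 (Kden_nonneg N s x y)), div_eq_mul_inv, mul_comm]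

private lemma wgNormSq_eq (hgsm : AEStronglyMeasurable g (volume.restrict Ωᶜ))
    {u : RN N → ℝ} (hu : Measurable u) :
    WgNormSq N s Ω g u = (∫⁻ x in Ω, ENNReal.ofReal (u x ^ 2)).toReal +
      (∫⁻ x in Ωᶜ, ENNReal.ofReal (|g x| * u x ^ 2)).toReal +
      (gagE N s (QSet Ω) u).toReal := by
  unfold WgNormSq
  rw [integral_eq_lintegral_of_nonneg_ae (ae_of_all _ fun x => sq_nonneg (u x))
      (meas_sq hu).aestronglyMeasurable,
    integral_eq_lintegral_of_nonneg_ae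
      (ae_of_all _ fun x => mul_nonneg (abs_nonneg _) (sq_nonneg _))
      ((by simpa [Real.norm_eq_abs] using hgsm.norm :
        AEStronglyMeasurable (fun x => |g x|) (volume.restrict Ωᶜ)).mul
        (meas_sq hu).aestronglyMeasurable)]

private lemma wgNormSq_nonneg (hgsm : AEStronglyMeasurable g (volume.restrict Ωᶜ))
    {u : RN N → ℝ} (hu : Measurable u) : 0 ≤ WgNormSq N s Ω g u := by
  rw [wgNormSq_eq hgsm hu]
  positivity

private lemma J_le_ofReal (hgsm : AEStronglyMeasurable g (volume.restrict Ωᶜ))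
    {u : RN N → ℝ} (hu : MemWg N s Ω g u) {c : ℝ} (hc : WgNormSq N s Ω g u ≤ c) :
    (∫⁻ x in Ω, ENNReal.ofReal (u x ^ 2)) ≤ ENNReal.ofReal c ∧
      (∫⁻ x in Ωᶜ, ENNReal.ofReal (|g x| * u x ^ 2)) ≤ ENNReal.ofReal c ∧
      gagE N s (QSet Ω) u ≤ ENNReal.ofReal c := by
  obtain ⟨hum, h1, h2, h3⟩ := hu
  rw [wgNormSq_eq hgsm hum] at hc
  have t1 := ENNReal.toReal_nonneg (a := ∫⁻ x in Ω, ENNReal.ofReal (u x ^ 2))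
  have t2 := ENNReal.toReal_nonneg (a := ∫⁻ x in Ωᶜ, ENNReal.ofReal (|g x| * u x ^ 2))
  have t3 := ENNReal.toReal_nonneg (a := gagE N s (QSet Ω) u)
  refine ⟨?_, ?_, ?_⟩
  · rw [← ENNReal.ofReal_toReal h1.ne]
    exact ENNReal.ofReal_le_ofReal (by linarith)
  · rw [← ENNReal.ofReal_toReal h2.ne]
    exact ENNReal.ofReal_le_ofReal (by linarith)
  · rw [← ENNReal.ofReal_toReal h3.ne]
    exact ENNReal.ofReal_le_ofReal (by linarith)

private lemma memWg_sub (hs : 0 ≤ s) (hgm : AEMeasurable g (volume.restrict Ωᶜ))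
    {u v : RN N → ℝ} (hu : MemWg N s Ω g u) (hv : MemWg N s Ω g v) :
    MemWg N s Ω g (u - v) := by
  obtain ⟨hum, hu1, hu2, hu3⟩ := hu
  obtain ⟨hvm, hv1, hv2, hv3⟩ := hv
  refine ⟨hum.sub hvm, ?_, ?_, ?_⟩
  · have hb := lintegral_weight_sq_sub_le (μ := volume.restrict Ω) (W := fun _ => 1)
      aemeasurable_const hum.aemeasurable hvm.aemeasurable
    simp only [one_mul] at hb
    calc (∫⁻ x in Ω, ENNReal.ofReal (((u - v) x) ^ 2))
        = ∫⁻ x in Ω, ENNReal.ofReal ((u x - v x) ^ 2) := by simp only [Pi.sub_apply]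
      _ ≤ 2 * (∫⁻ x in Ω, ENNReal.ofReal (u x ^ 2)) +
          2 * ∫⁻ x in Ω, ENNReal.ofReal (v x ^ 2) := hb
      _ < ⊤ := ENNReal.add_lt_top.2
          ⟨ENNReal.mul_lt_top (by norm_num) hu1, ENNReal.mul_lt_top (by norm_num) hv1⟩
  · have habs : AEMeasurable (fun x => ENNReal.ofReal |g x|) (volume.restrict Ωᶜ) :=
      ENNReal.measurable_ofReal.comp_aemeasurable
        (by simpa [Real.norm_eq_abs] using hgm.norm)
    have hb := lintegral_weight_sq_sub_le (μ := volume.restrict Ωᶜ)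
      (W := fun x => ENNReal.ofReal |g x|) habs hum.aemeasurable hvm.aemeasurable
    have hrw : ∀ w : RN N → ℝ, (∫⁻ x in Ωᶜ, ENNReal.ofReal (|g x| * w x ^ 2)) =
        ∫⁻ x in Ωᶜ, ENNReal.ofReal |g x| * ENNReal.ofReal (w x ^ 2) := fun w =>
      lintegral_congr fun x => ENNReal.ofReal_mul (abs_nonneg _)
    calc (∫⁻ x in Ωᶜ, ENNReal.ofReal (|g x| * ((u - v) x) ^ 2))
        = ∫⁻ x in Ωᶜ, ENNReal.ofReal |g x| * ENNReal.ofReal ((u x - v x) ^ 2) := by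
          rw [hrw (u - v)]; simp only [Pi.sub_apply]
      _ ≤ 2 * (∫⁻ x in Ωᶜ, ENNReal.ofReal |g x| * ENNReal.ofReal (u x ^ 2)) +
          2 * ∫⁻ x in Ωᶜ, ENNReal.ofReal |g x| * ENNReal.ofReal (v x ^ 2) := hb
      _ < ⊤ := by
          rw [← hrw u, ← hrw v]
          exact ENNReal.add_lt_top.2
            ⟨ENNReal.mul_lt_top (by norm_num) hu2, ENNReal.mul_lt_top (by norm_num) hv2⟩
  · have hW : AEMeasurable (fun p : RN N × RN N => ENNReal.ofReal (Kden N s p.1 p.2)⁻¹)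
        ((volume.prod volume).restrict (QSet Ω)) :=
      ((measurable_Kden N hs).inv.ennreal_ofReal).aemeasurable
    have hDu : AEMeasurable (fun p : RN N × RN N => u p.1 - u p.2)
        ((volume.prod volume).restrict (QSet Ω)) :=
      ((hum.comp measurable_fst).sub (hum.comp measurable_snd)).aemeasurable
    have hDv : AEMeasurable (fun p : RN N × RN N => v p.1 - v p.2)
        ((volume.prod volume).restrict (QSet Ω)) :=
      ((hvm.comp measurable_fst).sub (hvm.comp measurable_snd)).aemeasurable
    have hb := lintegral_weight_sq_sub_le hW hDu hDv
    have hrw : ∀ w : RN N → ℝ, gagE N s (QSet Ω) w =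
        ∫⁻ p in QSet Ω, ENNReal.ofReal (Kden N s p.1 p.2)⁻¹ *
          ENNReal.ofReal ((w p.1 - w p.2) ^ 2) := fun w =>
      lintegral_congr fun p => ofReal_div_K N s _ _ _
    calc gagE N s (QSet Ω) (u - v)
        = ∫⁻ p in QSet Ω, ENNReal.ofReal (Kden N s p.1 p.2)⁻¹ *
            ENNReal.ofReal (((u p.1 - u p.2) - (v p.1 - v p.2)) ^ 2) := by
          rw [hrw (u - v)]
          refine lintegral_congr fun p => ?_
          congr 2
          simp only [Pi.sub_apply]
          ring
      _ ≤ 2 * (∫⁻ p in QSet Ω, ENNReal.ofReal (Kden N s p.1 p.2)⁻¹ *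
            ENNReal.ofReal ((u p.1 - u p.2) ^ 2)) +
          2 * ∫⁻ p in QSet Ω, ENNReal.ofReal (Kden N s p.1 p.2)⁻¹ *
            ENNReal.ofReal ((v p.1 - v p.2) ^ 2) := hb
      _ < ⊤ := by
          rw [← hrw u, ← hrw v]
          exact ENNReal.add_lt_top.2
            ⟨ENNReal.mul_lt_top (by norm_num) hu3, ENNReal.mul_lt_top (by norm_num) hv3⟩

end Statement7Aux2

section Statement7Aux3

open MeasureTheory

variable {N : ℕ} {s : ℝ} {Ω : Set (RN N)} {g : RN N → ℝ}

/-- The candidate inner product on `W^{s,2}_{Ω,g}`. -/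
private def inn7 (N : ℕ) (s : ℝ) (Ω : Set (RN N)) (g : RN N → ℝ) (u v : RN N → ℝ) : ℝ :=
  (∫ x in Ω, u x * v x) + (∫ x in Ωᶜ, |g x| * (u x * v x)) + gagB N s (QSet Ω) u v

private lemma gagB_self (hs : 0 ≤ s) {u : RN N → ℝ} (hum : Measurable u) :
    gagB N s (QSet Ω) u u = (gagE N s (QSet Ω) u).toReal := by
  unfold gagB gagE
  have hDm : Measurable fun p : RN N × RN N => u p.1 - u p.2 :=
    (hum.comp measurable_fst).sub (hum.comp measurable_snd)
  have hIm : Measurable fun p : RN N × RN N =>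
      (u p.1 - u p.2) * (u p.1 - u p.2) / Kden N s p.1 p.2 :=
    (hDm.mul hDm).div (measurable_Kden N hs)
  rw [integral_eq_lintegral_of_nonneg_ae
      (ae_of_all _ fun p => div_nonneg (mul_self_nonneg _) (Kden_nonneg N s _ _))
      hIm.aestronglyMeasurable]
  congr 1
  exact lintegral_congr fun p => by rw [pow_two]

private lemma inn7_self (hs : 0 ≤ s) {u : RN N → ℝ} (hum : Measurable u) :
    inn7 N s Ω g u u = WgNormSq N s Ω g u := by
  unfold inn7 WgNormSq
  rw [gagB_self hs hum]
  simp only [pow_two]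

private lemma inn7_comm (u v : RN N → ℝ) : inn7 N s Ω g u v = inn7 N s Ω g v u := by
  have h1 : (fun x => u x * v x) = fun x => v x * u x := funext fun x => mul_comm _ _
  have h2 : (fun x => |g x| * (u x * v x)) = fun x => |g x| * (v x * u x) :=
    funext fun x => by ring
  have h3 : (fun p : RN N × RN N => (u p.1 - u p.2) * (v p.1 - v p.2) / Kden N s p.1 p.2)
      = fun p => (v p.1 - v p.2) * (u p.1 - u p.2) / Kden N s p.1 p.2 :=
    funext fun p => by ring
  unfold inn7 gagB
  rw [h1, h2, h3]

private lemma memL2_sqrtg (hgsm : AEStronglyMeasurable g (volume.restrict Ωᶜ))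
    {u : RN N → ℝ} (hum : Measurable u)
    (hfin : (∫⁻ x in Ωᶜ, ENNReal.ofReal (|g x| * u x ^ 2)) < ⊤) :
    MemLp (fun x => Real.sqrt |g x| * u x) 2 (volume.restrict Ωᶜ) := by
  refine memL2_of_lintegral_sq
    ((Real.continuous_sqrt.comp_aestronglyMeasurable
      (by simpa [Real.norm_eq_abs] using hgsm.norm)).mul hum.aestronglyMeasurable) ?_
  calc (∫⁻ x in Ωᶜ, ENNReal.ofReal ((Real.sqrt |g x| * u x) ^ 2))
      = ∫⁻ x in Ωᶜ, ENNReal.ofReal (|g x| * u x ^ 2) :=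
        lintegral_congr fun x => by rw [mul_pow, Real.sq_sqrt (abs_nonneg _)]
    _ < ⊤ := hfin

private lemma wInt (hgsm : AEStronglyMeasurable g (volume.restrict Ωᶜ))
    {u φ : RN N → ℝ} (hu : MemWg N s Ω g u) (hφ : MemWg N s Ω g φ) :
    Integrable (fun x => |g x| * (u x * φ x)) (volume.restrict Ωᶜ) := by
  have h1 := memL2_sqrtg hgsm hu.1 hu.2.2.1
  have h2 := memL2_sqrtg hgsm hφ.1 hφ.2.2.1
  refine (memL2_integrable_mul h1 h2).congr (ae_of_all _ fun x => ?_)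
  beta_reduce
  rw [show Real.sqrt |g x| * u x * (Real.sqrt |g x| * φ x)
      = Real.sqrt |g x| * Real.sqrt |g x| * (u x * φ x) from by ring,
    Real.mul_self_sqrt (abs_nonneg _)]

private lemma gagL2 (hs : 0 ≤ s) {u : RN N → ℝ} (hum : Measurable u)
    (hfin : gagE N s (QSet Ω) u < ⊤) :
    MemLp (fun p : RN N × RN N => (u p.1 - u p.2) / Real.sqrt (Kden N s p.1 p.2)) 2
      ((volume : Measure (RN N × RN N)).restrict (QSet Ω)) := by
  have hDm : Measurable fun p : RN N × RN N => u p.1 - u p.2 :=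
    (hum.comp measurable_fst).sub (hum.comp measurable_snd)
  have hKm : Measurable fun p : RN N × RN N => Real.sqrt (Kden N s p.1 p.2) :=
    Real.continuous_sqrt.measurable.comp (measurable_Kden N hs)
  refine memL2_of_lintegral_sq (Measurable.aestronglyMeasurable (hDm.div hKm)) ?_
  calc (∫⁻ p in QSet Ω,
        ENNReal.ofReal (((u p.1 - u p.2) / Real.sqrt (Kden N s p.1 p.2)) ^ 2))
      = gagE N s (QSet Ω) u := lintegral_congr fun p => by
        rw [div_pow, Real.sq_sqrt (Kden_nonneg N s _ _)]
    _ < ⊤ := hfin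

private lemma gagInt (hs : 0 ≤ s) {u v : RN N → ℝ} (hu : MemWg N s Ω g u)
    (hv : MemWg N s Ω g v) :
    Integrable (fun p : RN N × RN N => (u p.1 - u p.2) * (v p.1 - v p.2) / Kden N s p.1 p.2)
      ((volume : Measure (RN N × RN N)).restrict (QSet Ω)) := by
  refine (memL2_integrable_mul (gagL2 hs hu.1 hu.2.2.2) (gagL2 hs hv.1 hv.2.2.2)).congr
    (ae_of_all _ fun p => ?_)
  beta_reduce
  rw [div_mul_div_comm, Real.mul_self_sqrt (Kden_nonneg N s _ _)]

private lemma inn7_add (hs : 0 ≤ s) (hgsm : AEStronglyMeasurable g (volume.restrict Ωᶜ))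
    {u v φ : RN N → ℝ} (hu : MemWg N s Ω g u) (hv : MemWg N s Ω g v)
    (hφ : MemWg N s Ω g φ) :
    inn7 N s Ω g (u + v) φ = inn7 N s Ω g u φ + inn7 N s Ω g v φ := by
  have huΩ : MemLp u 2 (volume.restrict Ω) :=
    memL2_of_lintegral_sq hu.1.aestronglyMeasurable hu.2.1
  have hvΩ : MemLp v 2 (volume.restrict Ω) :=
    memL2_of_lintegral_sq hv.1.aestronglyMeasurable hv.2.1
  have hφΩ : MemLp φ 2 (volume.restrict Ω) :=
    memL2_of_lintegral_sq hφ.1.aestronglyMeasurable hφ.2.1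
  have e1 : (∫ x in Ω, (u + v) x * φ x)
      = (∫ x in Ω, u x * φ x) + ∫ x in Ω, v x * φ x := by
    rw [← integral_add (memL2_integrable_mul huΩ hφΩ) (memL2_integrable_mul hvΩ hφΩ)]
    exact integral_congr_ae (ae_of_all _ fun x => by simp [add_mul])
  have e2 : (∫ x in Ωᶜ, |g x| * ((u + v) x * φ x))
      = (∫ x in Ωᶜ, |g x| * (u x * φ x)) + ∫ x in Ωᶜ, |g x| * (v x * φ x) := by
    rw [← integral_add (wInt hgsm hu hφ) (wInt hgsm hv hφ)]
    refine integral_congr_ae (ae_of_all _ fun x => ?_)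
    simp only [Pi.add_apply]
    ring
  have e3 : gagB N s (QSet Ω) (u + v) φ
      = gagB N s (QSet Ω) u φ + gagB N s (QSet Ω) v φ := by
    unfold gagB
    rw [← integral_add (gagInt hs hu hφ) (gagInt hs hv hφ)]
    refine integral_congr_ae (ae_of_all _ fun p => ?_)
    simp only [Pi.add_apply]
    ring
  unfold inn7
  rw [e1, e2, e3]
  ring

private lemma inn7_smul (c : ℝ) (u v : RN N → ℝ) :
    inn7 N s Ω g (c • u) v = c * inn7 N s Ω g u v := by
  have e1 : (∫ x in Ω, (c • u) x * v x) = c * ∫ x in Ω, u x * v x := by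
    rw [← integral_const_mul]
    refine integral_congr_ae (ae_of_all _ fun x => ?_)
    simp only [Pi.smul_apply, smul_eq_mul]
    ring
  have e2 : (∫ x in Ωᶜ, |g x| * ((c • u) x * v x))
      = c * ∫ x in Ωᶜ, |g x| * (u x * v x) := by
    rw [← integral_const_mul]
    refine integral_congr_ae (ae_of_all _ fun x => ?_)
    simp only [Pi.smul_apply, smul_eq_mul]
    ring
  have e3 : gagB N s (QSet Ω) (c • u) v = c * gagB N s (QSet Ω) u v := by
    unfold gagB
    rw [← integral_const_mul]
    refine integral_congr_ae (ae_of_all _ fun p => ?_)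
    simp only [Pi.smul_apply, smul_eq_mul]
    ring
  unfold inn7
  rw [e1, e2, e3]
  ring

end Statement7Aux3

section Statement7Aux4

open MeasureTheory

private lemma exists_ball (N : ℕ) (hN : 1 ≤ N) {s : ℝ} (hs0 : 0 < s) (hs1 : s < 1)
    (Ω : Set (RN N)) (hΩo : IsOpen Ω) :
    ∃ (B : Set (RN N)) (C : ℝ≥0∞), MeasurableSet B ∧ B ⊆ Ω ∧ C ≠ ⊤ ∧
      (∀ x ∈ B, (∫⁻ y in Ωᶜ, ENNReal.ofReal (Kden N s x y)⁻¹) ≤ C) ∧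
      (Ω.Nonempty → ∀ y : RN N, (∫⁻ x in B, ENNReal.ofReal (Kden N s x y)⁻¹) ≠ 0) := by
  rcases Ω.eq_empty_or_nonempty with hΩe | hΩn
  · exact ⟨∅, 0, MeasurableSet.empty, by simp, by simp, by simp,
      fun hne => absurd hΩe hne.ne_empty⟩
  obtain ⟨x₀, hx₀⟩ := hΩn
  obtain ⟨ρ, hρ, hball⟩ := Metric.isOpen_iff.mp hΩo x₀ hx₀
  set r₀ : ℝ := ρ / 3 with hr₀def
  have hr₀ : 0 < r₀ := by positivity
  set r : ℝ := (N : ℝ) + 2 * s with hrdef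
  have hrpos : 0 < r := by positivity
  have hNr : (Module.finrank ℝ (RN N) : ℝ) < r := by
    rw [finrank_euclideanSpace_fin]
    simp only [hrdef]
    linarith
  have hdist : ∀ x ∈ Metric.ball x₀ r₀, ∀ y ∈ Ωᶜ, r₀ ≤ ‖x - y‖ := by
    intro x hx y hy
    have h1 : ρ ≤ dist y x₀ := by
      by_contra h
      push_neg at h
      exact hy (hball (Metric.mem_ball.2 h))
    have h2 : dist x x₀ < r₀ := Metric.mem_ball.1 hx
    have h3 := dist_triangle y x x₀
    have h4 : dist y x = ‖x - y‖ := by rw [dist_comm, dist_eq_norm]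
    rw [← h4]
    linarith
  set h : RN N → ℝ≥0∞ := fun z => ENNReal.ofReal ((max r₀ ‖z‖) ^ (-r)) with hhdef
  set C : ℝ≥0∞ := ∫⁻ z : RN N, h z with hCdef
  have hCne : C ≠ ⊤ := by
    set m : ℝ := min r₀ 1 / 2 with hmdef
    have hm0 : 0 < m := by positivity
    have hpt : ∀ z : RN N, (max r₀ ‖z‖) ^ (-r) ≤ m ^ (-r) * (1 + ‖z‖) ^ (-r) := by
      intro z
      have h1 : m * (1 + ‖z‖) ≤ max r₀ ‖z‖ := by
        rcases le_total ‖z‖ 1 with hz | hz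
        · have hm1 : m * (1 + ‖z‖) ≤ min r₀ 1 := by
            have : min r₀ 1 ≤ 1 := min_le_right _ _
            nlinarith [norm_nonneg z, lt_min hr₀ one_pos]
          exact le_trans (le_trans hm1 (min_le_left _ _)) (le_max_left _ _)
        · have hm2 : m ≤ 1 / 2 := by
            rw [hmdef]
            have : min r₀ 1 ≤ 1 := min_le_right _ _
            linarith
          have : m * (1 + ‖z‖) ≤ ‖z‖ := by nlinarith [norm_nonneg z]
          exact le_trans this (le_max_right _ _)
      have h2 : (m * (1 + ‖z‖)) ^ (-r) ≤ ((max r₀ ‖z‖) : ℝ) ^ (-r) → True := fun _ => trivial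
      have h3 : ((max r₀ ‖z‖) : ℝ) ^ (-r) ≤ (m * (1 + ‖z‖)) ^ (-r) :=
        Real.rpow_le_rpow_of_nonpos (by positivity) h1 (by linarith)
      rwa [Real.mul_rpow hm0.le (by positivity)] at h3
    have hint : Integrable (fun z : RN N => m ^ (-r) * (1 + ‖z‖) ^ (-r)) volume :=
      (integrable_one_add_norm hNr).const_mul _
    refine ne_top_of_le_ne_top hint.2.ne ?_
    refine lintegral_mono fun z => ?_
    refine le_trans (ENNReal.ofReal_le_ofReal (hpt z)) ?_
    exact Real.ofReal_le_enorm _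
  refine ⟨Metric.ball x₀ r₀, C, measurableSet_ball, ?_, hCne, ?_, ?_⟩
  · intro x hx
    have : dist x x₀ < r₀ := Metric.mem_ball.1 hx
    refine hball (Metric.mem_ball.2 ?_)
    rw [hr₀def] at this
    linarith
  · intro x hx
    have hpt : ∀ y ∈ Ωᶜ, ENNReal.ofReal (Kden N s x y)⁻¹ ≤ h (y - x) := by
      intro y hy
      have h1 : r₀ ≤ ‖x - y‖ := hdist x hx y hy
      have h2 : ‖y - x‖ = ‖x - y‖ := norm_sub_rev _ _
      have h3 : max r₀ ‖y - x‖ = ‖x - y‖ := by rw [h2]; exact max_eq_right h1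
      rw [hhdef]
      simp only []
      rw [h3]
      unfold Kden
      rw [Real.rpow_neg (norm_nonneg _)]
    calc (∫⁻ y in Ωᶜ, ENNReal.ofReal (Kden N s x y)⁻¹)
        ≤ ∫⁻ y in Ωᶜ, h (y - x) := setLIntegral_mono' hΩo.measurableSet.compl hpt
      _ ≤ ∫⁻ y, h (y - x) := setLIntegral_le_lintegral _ _
      _ = C := by
          rw [hCdef]
          simp_rw [sub_eq_add_neg]
          exact lintegral_add_right_eq_self h (-x)
  · intro _ y hzero
    haveI : Nontrivial (RN N) := by
      refine ⟨0, EuclideanSpace.single ⟨0, hN⟩ 1, fun hcon => ?_⟩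
      have := congrArg (· ⟨0, hN⟩) hcon
      simp [EuclideanSpace.single_apply] at this
    haveI : Filter.NeBot (nhdsWithin (0 : RN N) {(0 : RN N)}ᶜ) :=
      Module.punctured_nhds_neBot ℝ (RN N) 0
    have hmeas : Measurable fun x : RN N => ENNReal.ofReal (Kden N s x y)⁻¹ :=
      (((measurable_Kden N hs0.le).comp
        (measurable_id.prodMk measurable_const)).inv).ennreal_ofReal
    rw [lintegral_eq_zero_iff hmeas] at hzero
    have hT : volume ({x : RN N | ¬ ENNReal.ofReal (Kden N s x y)⁻¹ = 0}
        ∩ Metric.ball x₀ r₀) = 0 := by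
      have := ae_iff.1 hzero
      rwa [Measure.restrict_apply' measurableSet_ball] at this
    have hsub : Metric.ball x₀ r₀ \ {y} ⊆
        {x : RN N | ¬ ENNReal.ofReal (Kden N s x y)⁻¹ = 0} ∩ Metric.ball x₀ r₀ := by
      intro x hx
      refine ⟨?_, hx.1⟩
      have hxy : x ≠ y := hx.2
      have hK : 0 < Kden N s x y := by
        unfold Kden
        exact Real.rpow_pos_of_pos (by simpa [sub_eq_zero] using hxy) _
      simp only [Set.mem_setOf_eq, ENNReal.ofReal_eq_zero, not_le]
      positivity
    have hnull : volume (Metric.ball x₀ r₀ \ {y}) = 0 := measure_mono_null hsub hT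
    have hb : volume (Metric.ball x₀ r₀) ≤ volume (Metric.ball x₀ r₀ \ {y}) + volume {y} := by
      refine le_trans (measure_mono ?_) (measure_union_le _ _)
      intro x hx
      by_cases hxy : x = y
      · exact Or.inr (by simp [hxy])
      · exact Or.inl ⟨hx, hxy⟩
    rw [hnull, measure_singleton, add_zero] at hb
    exact absurd (le_antisymm hb (by simp)) (Metric.measure_ball_pos volume x₀ hr₀).ne'

end Statement7Aux4

section Statement7Aux5

open MeasureTheory

variable {N : ℕ} {s : ℝ} {Ω : Set (RN N)} {g : RN N → ℝ}

private lemma measurable_W (hs : 0 ≤ s) (B : Set (RN N)) :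
    Measurable fun y : RN N => ∫⁻ x in B, ENNReal.ofReal (Kden N s x y)⁻¹ := by
  have hm : Measurable fun q : RN N × RN N => ENNReal.ofReal (Kden N s q.2 q.1)⁻¹ :=
    (((measurable_Kden N hs).comp measurable_swap).inv).ennreal_ofReal
  exact hm.lintegral_prod_right'

private lemma mu2_lintegral (hgm : AEMeasurable g (volume.restrict Ωᶜ)) {d : RN N → ℝ}
    (hd : Measurable d) :
    ∫⁻ x, ENNReal.ofReal (d x ^ 2) ∂((volume.restrict Ωᶜ).withDensity
      (fun x => ENNReal.ofReal |hgm.mk g x|)) =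
      ∫⁻ x in Ωᶜ, ENNReal.ofReal (|g x| * d x ^ 2) := by
  have habs : Measurable fun x => ENNReal.ofReal |hgm.mk g x| := by
    refine Measurable.ennreal_ofReal ?_
    simpa [Real.norm_eq_abs] using hgm.measurable_mk.norm
  rw [lintegral_withDensity_eq_lintegral_mul _ habs (meas_sq hd).ennreal_ofReal]
  refine lintegral_congr_ae (hgm.ae_eq_mk.mono fun x hx => ?_)
  simp only [Pi.mul_apply]
  rw [← ENNReal.ofReal_mul (abs_nonneg _), ← hx]

private lemma mu3_lintegral (hs : 0 ≤ s) {d : RN N → ℝ} (hd : Measurable d) :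
    ∫⁻ p, ENNReal.ofReal ((d p.1 - d p.2) ^ 2) ∂(((volume : Measure (RN N × RN N)).restrict
      (QSet Ω)).withDensity (fun p => ENNReal.ofReal (Kden N s p.1 p.2)⁻¹)) =
      gagE N s (QSet Ω) d := by
  have hDm : Measurable fun p : RN N × RN N => d p.1 - d p.2 :=
    (hd.comp measurable_fst).sub (hd.comp measurable_snd)
  rw [lintegral_withDensity_eq_lintegral_mul _ (show Measurable fun p : RN N × RN N =>
      ENNReal.ofReal (Kden N s p.1 p.2)⁻¹ from (measurable_Kden N hs).inv.ennreal_ofReal)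
    (meas_sq hDm).ennreal_ofReal]
  unfold gagE
  refine lintegral_congr fun p => ?_
  simp only [Pi.mul_apply]
  exact (ofReal_div_K N s _ _ _).symm

private lemma mu4_bound (hs : 0 ≤ s) (hΩm : MeasurableSet Ω) {B : Set (RN N)}
    (hBm : MeasurableSet B) (hBΩ : B ⊆ Ω) {C : ℝ≥0∞}
    (hC : ∀ x ∈ B, (∫⁻ y in Ωᶜ, ENNReal.ofReal (Kden N s x y)⁻¹) ≤ C)
    {d : RN N → ℝ} (hd : Measurable d) :
    (∫⁻ y in Ωᶜ, (∫⁻ x in B, ENNReal.ofReal (Kden N s x y)⁻¹) * ENNReal.ofReal (d y ^ 2)) ≤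
      2 * gagE N s (QSet Ω) d + 2 * C * ∫⁻ x in Ω, ENNReal.ofReal (d x ^ 2) := by
  set k : RN N × RN N → ℝ≥0∞ := fun p => ENNReal.ofReal (Kden N s p.1 p.2)⁻¹ with hkdef
  have hkm : Measurable k := (measurable_Kden N hs).inv.ennreal_ofReal
  have hDm : Measurable fun p : RN N × RN N => d p.1 - d p.2 :=
    (hd.comp measurable_fst).sub (hd.comp measurable_snd)
  have hF1 : Measurable fun p : RN N × RN N => k p * ENNReal.ofReal ((d p.1 - d p.2) ^ 2) :=
    hkm.mul (meas_sq hDm).ennreal_ofReal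
  have hF2 : Measurable fun p : RN N × RN N => k p * ENNReal.ofReal (d p.1 ^ 2) :=
    hkm.mul ((meas_sq hd).ennreal_ofReal.comp measurable_fst)
  have step0 : (∫⁻ y in Ωᶜ, (∫⁻ x in B, k (x, y)) * ENNReal.ofReal (d y ^ 2)) =
      ∫⁻ y in Ωᶜ, ∫⁻ x in B, k (x, y) * ENNReal.ofReal (d y ^ 2) :=
    lintegral_congr fun y =>
      (lintegral_mul_const' (ENNReal.ofReal (d y ^ 2)) _ ENNReal.ofReal_ne_top).symm
  have hptw : ∀ x y : RN N, k (x, y) * ENNReal.ofReal (d y ^ 2) ≤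
      2 * (k (x, y) * ENNReal.ofReal ((d x - d y) ^ 2)) +
        2 * (k (x, y) * ENNReal.ofReal (d x ^ 2)) := by
    intro x y
    have h1 : ENNReal.ofReal (d y ^ 2) ≤
        2 * ENNReal.ofReal ((d x - d y) ^ 2) + 2 * ENNReal.ofReal (d x ^ 2) := by
      have h := ofReal_sq_sub_le (d x) (d x - d y)
      rw [show d x - (d x - d y) = d y from by ring] at h
      calc ENNReal.ofReal (d y ^ 2)
          ≤ 2 * ENNReal.ofReal (d x ^ 2) + 2 * ENNReal.ofReal ((d x - d y) ^ 2) := h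
        _ = 2 * ENNReal.ofReal ((d x - d y) ^ 2) + 2 * ENNReal.ofReal (d x ^ 2) := by ring
    calc k (x, y) * ENNReal.ofReal (d y ^ 2)
        ≤ k (x, y) * (2 * ENNReal.ofReal ((d x - d y) ^ 2) + 2 * ENNReal.ofReal (d x ^ 2)) :=
          mul_le_mul_right h1 _
      _ = 2 * (k (x, y) * ENNReal.ofReal ((d x - d y) ^ 2)) +
          2 * (k (x, y) * ENNReal.ofReal (d x ^ 2)) := by ring
  have hmA : Measurable fun y : RN N => ∫⁻ x in B, k (x, y) * ENNReal.ofReal ((d x - d y) ^ 2) := by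
    have : Measurable fun q : RN N × RN N => k (q.2, q.1) * ENNReal.ofReal ((d q.2 - d q.1) ^ 2) :=
      hF1.comp measurable_swap
    exact this.lintegral_prod_right'
  have hmB : Measurable fun y : RN N => ∫⁻ x in B, k (x, y) * ENNReal.ofReal (d x ^ 2) := by
    have : Measurable fun q : RN N × RN N => k (q.2, q.1) * ENNReal.ofReal (d q.2 ^ 2) :=
      hF2.comp measurable_swap
    exact this.lintegral_prod_right'
  have hswapA : (∫⁻ y in Ωᶜ, ∫⁻ x in B, k (x, y) * ENNReal.ofReal ((d x - d y) ^ 2)) =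
      ∫⁻ x in B, ∫⁻ y in Ωᶜ, k (x, y) * ENNReal.ofReal ((d x - d y) ^ 2) := by
    exact lintegral_lintegral_swap ((hF1.comp measurable_swap).aemeasurable)
  have hswapB : (∫⁻ y in Ωᶜ, ∫⁻ x in B, k (x, y) * ENNReal.ofReal (d x ^ 2)) =
      ∫⁻ x in B, ∫⁻ y in Ωᶜ, k (x, y) * ENNReal.ofReal (d x ^ 2) := by
    exact lintegral_lintegral_swap ((hF2.comp measurable_swap).aemeasurable)
  have hA : (∫⁻ x in B, ∫⁻ y in Ωᶜ, k (x, y) * ENNReal.ofReal ((d x - d y) ^ 2)) ≤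
      gagE N s (QSet Ω) d := by
    have hprod : (∫⁻ x in B, ∫⁻ y in Ωᶜ, k (x, y) * ENNReal.ofReal ((d x - d y) ^ 2)) =
        ∫⁻ p in B ×ˢ Ωᶜ, k p * ENNReal.ofReal ((d p.1 - d p.2) ^ 2)
          ∂(volume : Measure (RN N × RN N)) := by
      rw [show ((volume : Measure (RN N × RN N))) = (volume.prod volume) from rfl,
        ← Measure.prod_restrict, lintegral_prod _ hF1.aemeasurable]
    rw [hprod]
    have hsub : B ×ˢ Ωᶜ ⊆ QSet Ω := by
      intro p hp hmem
      exact hmem.1 (hBΩ hp.1)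
    refine le_trans (lintegral_mono_set hsub) ?_
    unfold gagE
    refine le_of_eq (lintegral_congr fun p => ?_)
    exact (ofReal_div_K N s _ _ _).symm
  have hB2 : (∫⁻ x in B, ∫⁻ y in Ωᶜ, k (x, y) * ENNReal.ofReal (d x ^ 2)) ≤
      C * ∫⁻ x in Ω, ENNReal.ofReal (d x ^ 2) := by
    have e1 : ∀ x, (∫⁻ y in Ωᶜ, k (x, y) * ENNReal.ofReal (d x ^ 2)) =
        (∫⁻ y in Ωᶜ, k (x, y)) * ENNReal.ofReal (d x ^ 2) := fun x =>
      lintegral_mul_const' (ENNReal.ofReal (d x ^ 2)) _ ENNReal.ofReal_ne_top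
    calc (∫⁻ x in B, ∫⁻ y in Ωᶜ, k (x, y) * ENNReal.ofReal (d x ^ 2))
        = ∫⁻ x in B, (∫⁻ y in Ωᶜ, k (x, y)) * ENNReal.ofReal (d x ^ 2) :=
          lintegral_congr fun x => e1 x
      _ ≤ ∫⁻ x in B, C * ENNReal.ofReal (d x ^ 2) :=
          setLIntegral_mono' hBm fun x hx => mul_le_mul_left (hC x hx) _
      _ = C * ∫⁻ x in B, ENNReal.ofReal (d x ^ 2) :=
          lintegral_const_mul C (meas_sq hd).ennreal_ofReal
      _ ≤ C * ∫⁻ x in Ω, ENNReal.ofReal (d x ^ 2) :=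
          mul_le_mul_right (lintegral_mono_set hBΩ) _
  calc (∫⁻ y in Ωᶜ, (∫⁻ x in B, k (x, y)) * ENNReal.ofReal (d y ^ 2))
      = ∫⁻ y in Ωᶜ, ∫⁻ x in B, k (x, y) * ENNReal.ofReal (d y ^ 2) := step0
    _ ≤ ∫⁻ y in Ωᶜ, ∫⁻ x in B, (2 * (k (x, y) * ENNReal.ofReal ((d x - d y) ^ 2)) +
          2 * (k (x, y) * ENNReal.ofReal (d x ^ 2))) :=
        lintegral_mono fun y => lintegral_mono fun x => hptw x y
    _ = ∫⁻ y in Ωᶜ, (2 * (∫⁻ x in B, k (x, y) * ENNReal.ofReal ((d x - d y) ^ 2)) +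
          2 * ∫⁻ x in B, k (x, y) * ENNReal.ofReal (d x ^ 2)) := by
        refine lintegral_congr fun y => ?_
        have hm1 : Measurable fun x => 2 * (k (x, y) * ENNReal.ofReal ((d x - d y) ^ 2)) :=
          ((hF1.comp (measurable_id.prodMk measurable_const)).const_mul 2)
        rw [lintegral_add_left hm1, lintegral_const_mul' 2 _ (by norm_num),
          lintegral_const_mul' 2 _ (by norm_num)]
    _ = 2 * (∫⁻ y in Ωᶜ, ∫⁻ x in B, k (x, y) * ENNReal.ofReal ((d x - d y) ^ 2)) +
          2 * ∫⁻ y in Ωᶜ, ∫⁻ x in B, k (x, y) * ENNReal.ofReal (d x ^ 2) := by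
        rw [lintegral_add_left (hmA.const_mul 2), lintegral_const_mul' 2 _ (by norm_num),
          lintegral_const_mul' 2 _ (by norm_num)]
    _ ≤ 2 * gagE N s (QSet Ω) d + 2 * (C * ∫⁻ x in Ω, ENNReal.ofReal (d x ^ 2)) := by
        rw [hswapA, hswapB]
        exact add_le_add (mul_le_mul_right hA _) (mul_le_mul_right hB2 _)
    _ = 2 * gagE N s (QSet Ω) d + 2 * C * ∫⁻ x in Ω, ENNReal.ofReal (d x ^ 2) := by
        rw [mul_assoc]

end Statement7Aux5

/-- For `g ∈ L¹(ℝ^N∖Ω)`, the space `W^{s,2}_{Ω,g}` is a Hilbert space: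
its norm is induced by an inner product, and every Cauchy sequence (with respect to the
norm) converges in norm to an element of the space (functions equal a.e. being identified). -/
theorem statement7 (N : ℕ) (hN : 1 ≤ N) (s : ℝ) (hs0 : 0 < s) (hs1 : s < 1)
    (Ω : Set (RN N)) (hΩo : IsOpen Ω) (hΩb : Bornology.IsBounded Ω)
    (g : RN N → ℝ) (hg : IntegrableOn g Ωᶜ) :
    (∃ inn : (RN N → ℝ) → (RN N → ℝ) → ℝ,
        (∀ u, MemWg N s Ω g u → inn u u = WgNormSq N s Ω g u) ∧
        (∀ u v, MemWg N s Ω g u → MemWg N s Ω g v → inn u v = inn v u) ∧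
        (∀ u v φ, MemWg N s Ω g u → MemWg N s Ω g v → MemWg N s Ω g φ →
          inn (u + v) φ = inn u φ + inn v φ) ∧
        (∀ (c : ℝ) (u v : RN N → ℝ), MemWg N s Ω g u → MemWg N s Ω g v →
          inn (c • u) v = c * inn u v)) ∧
      ∀ useq : ℕ → RN N → ℝ, (∀ n, MemWg N s Ω g (useq n)) →
        (∀ ε : ℝ, 0 < ε → ∃ M : ℕ, ∀ m, M ≤ m → ∀ n, M ≤ n →
          Real.sqrt (WgNormSq N s Ω g (useq m - useq n)) < ε) →
        ∃ u : RN N → ℝ, MemWg N s Ω g u ∧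
          Tendsto (fun n => Real.sqrt (WgNormSq N s Ω g (useq n - u))) atTop (𝓝 0) := by
  constructor
  · exact ⟨inn7 N s Ω g, fun u hu => inn7_self hs0.le hu.1, fun u v _ _ => inn7_comm u v,
      fun u v φ hu hv hφ => inn7_add hs0.le hg.1 hu hv hφ, fun c u v _ _ => inn7_smul c u v⟩
  · intro useq hmem hcauchy
    have hΩm : MeasurableSet Ω := hΩo.measurableSet
    have hQm : MeasurableSet (QSet Ω) := (hΩm.compl.prod hΩm.compl).compl
    have hgsm : AEStronglyMeasurable g (volume.restrict Ωᶜ) := hg.1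
    have hgm : AEMeasurable g (volume.restrict Ωᶜ) := hgsm.aemeasurable
    obtain ⟨B, C, hBm, hBΩ, hCne, hCb, hWpos⟩ := exists_ball N hN hs0 hs1 Ω hΩo
    set W : RN N → ℝ≥0∞ := fun y => ∫⁻ x in B, ENNReal.ofReal (Kden N s x y)⁻¹ with hWdef
    have hWm : Measurable W := measurable_W hs0.le B
    set μ2 : Measure (RN N) := (volume.restrict Ωᶜ).withDensity
      (fun x => ENNReal.ofReal |hgm.mk g x|) with hμ2def
    set μ3 : Measure (RN N × RN N) := (((volume : Measure (RN N × RN N))).restrict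
      (QSet Ω)).withDensity (fun p => ENNReal.ofReal (Kden N s p.1 p.2)⁻¹) with hμ3def
    set μ4 : Measure (RN N) := (volume.restrict Ωᶜ).withDensity W with hμ4def
    set ν : Measure (RN N) := volume.restrict Ω + μ2 + μ4 with hνdef
    have humeas : ∀ n, Measurable (useq n) := fun n => (hmem n).1
    have hsubmem : ∀ m n, MemWg N s Ω g (useq m - useq n) := fun m n =>
      memWg_sub hs0.le hgm (hmem m) (hmem n)
    have hcauchy' : ∀ ε : ℝ, 0 < ε → ∃ M : ℕ, ∀ m, M ≤ m → ∀ n, M ≤ n →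
        (∫⁻ x in Ω, ENNReal.ofReal (((useq m - useq n) x) ^ 2)) ≤ ENNReal.ofReal ε ∧
        (∫⁻ x in Ωᶜ, ENNReal.ofReal (|g x| * ((useq m - useq n) x) ^ 2)) ≤ ENNReal.ofReal ε ∧
        gagE N s (QSet Ω) (useq m - useq n) ≤ ENNReal.ofReal ε := by
      intro ε hε
      obtain ⟨M, hM⟩ := hcauchy (Real.sqrt ε) (Real.sqrt_pos.2 hε)
      refine ⟨M, fun m hm n hn => ?_⟩
      have h1 := hM m hm n hn
      have hnn : 0 ≤ WgNormSq N s Ω g (useq m - useq n) :=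
        wgNormSq_nonneg hgsm (hsubmem m n).1
      have h2 : WgNormSq N s Ω g (useq m - useq n) ≤ ε := by
        have h3 : Real.sqrt (WgNormSq N s Ω g (useq m - useq n)) ^ 2 < Real.sqrt ε ^ 2 :=
          pow_lt_pow_left₀ h1 (Real.sqrt_nonneg _) two_ne_zero
        rw [Real.sq_sqrt hnn, Real.sq_sqrt hε.le] at h3
        exact h3.le
      exact J_le_ofReal hgsm (hsubmem m n) h2
    -- domination of ν by the norm components
    have hnu : ∀ d : RN N → ℝ, Measurable d →
        (∫⁻ x, ENNReal.ofReal (d x ^ 2) ∂ν) ≤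
          (1 + 2 * C) * (∫⁻ x in Ω, ENNReal.ofReal (d x ^ 2)) +
          (∫⁻ x in Ωᶜ, ENNReal.ofReal (|g x| * d x ^ 2)) +
          2 * gagE N s (QSet Ω) d := by
      intro d hd
      have e0 : (∫⁻ x, ENNReal.ofReal (d x ^ 2) ∂ν) =
          (∫⁻ x in Ω, ENNReal.ofReal (d x ^ 2)) +
          (∫⁻ x, ENNReal.ofReal (d x ^ 2) ∂μ2) +
          ∫⁻ x, ENNReal.ofReal (d x ^ 2) ∂μ4 := by
        rw [hνdef, lintegral_add_measure, lintegral_add_measure]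
      have e2 := mu2_lintegral hgm hd
      have e4 : (∫⁻ x, ENNReal.ofReal (d x ^ 2) ∂μ4) =
          ∫⁻ y in Ωᶜ, W y * ENNReal.ofReal (d y ^ 2) := by
        rw [hμ4def, lintegral_withDensity_eq_lintegral_mul _ hWm (meas_sq hd).ennreal_ofReal]
        exact lintegral_congr fun y => rfl
      have e4b := mu4_bound hs0.le hΩm hBm hBΩ hCb hd
      rw [e0, e2, e4]
      calc (∫⁻ x in Ω, ENNReal.ofReal (d x ^ 2)) +
            (∫⁻ x in Ωᶜ, ENNReal.ofReal (|g x| * d x ^ 2)) +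
            (∫⁻ y in Ωᶜ, W y * ENNReal.ofReal (d y ^ 2))
          ≤ (∫⁻ x in Ω, ENNReal.ofReal (d x ^ 2)) +
            (∫⁻ x in Ωᶜ, ENNReal.ofReal (|g x| * d x ^ 2)) +
            (2 * gagE N s (QSet Ω) d + 2 * C * ∫⁻ x in Ω, ENNReal.ofReal (d x ^ 2)) :=
            add_le_add_right e4b _
        _ = (1 + 2 * C) * (∫⁻ x in Ω, ENNReal.ofReal (d x ^ 2)) +
            (∫⁻ x in Ωᶜ, ENNReal.ofReal (|g x| * d x ^ 2)) +
            2 * gagE N s (QSet Ω) d := by ring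
    -- fast Cauchy subsequence
    set K0 : ℝ≥0∞ := (1 + 2 * C) + 1 + 2 with hK0def
    have hK0ne : K0 ≠ ⊤ := by
      rw [hK0def]
      refine ENNReal.add_ne_top.2 ⟨ENNReal.add_ne_top.2 ⟨ENNReal.add_ne_top.2
        ⟨by norm_num, ENNReal.mul_ne_top (by norm_num) hCne⟩, by norm_num⟩, by norm_num⟩
    set κ : ℝ := K0.toReal + 1 with hκdef
    have hκpos : 0 < κ := by positivity
    have hK0κ : K0 ≤ ENNReal.ofReal κ := by
      rw [← ENNReal.ofReal_toReal hK0ne]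
      exact ENNReal.ofReal_le_ofReal (by rw [hκdef]; linarith)
    have hfast : ∀ k : ℕ, ∃ M : ℕ, ∀ m, M ≤ m → ∀ n, M ≤ n →
        (∫⁻ x, ENNReal.ofReal ((useq m x - useq n x) ^ 2) ∂ν) ≤
          ENNReal.ofReal ((16 : ℝ)⁻¹ ^ k) := by
      intro k
      have hεpos : 0 < (16 : ℝ)⁻¹ ^ k / κ := by positivity
      obtain ⟨M, hM⟩ := hcauchy' _ hεpos
      refine ⟨M, fun m hm n hn => ?_⟩
      obtain ⟨c1, c2, c3⟩ := hM m hm n hn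
      have hb := hnu (useq m - useq n) (hsubmem m n).1
      have hb2 : (∫⁻ x, ENNReal.ofReal (((useq m - useq n) x) ^ 2) ∂ν) ≤
          K0 * ENNReal.ofReal ((16 : ℝ)⁻¹ ^ k / κ) := by
        refine le_trans hb ?_
        calc (1 + 2 * C) * (∫⁻ x in Ω, ENNReal.ofReal (((useq m - useq n) x) ^ 2)) +
              (∫⁻ x in Ωᶜ, ENNReal.ofReal (|g x| * ((useq m - useq n) x) ^ 2)) +
              2 * gagE N s (QSet Ω) (useq m - useq n)
            ≤ (1 + 2 * C) * ENNReal.ofReal ((16 : ℝ)⁻¹ ^ k / κ) +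
              ENNReal.ofReal ((16 : ℝ)⁻¹ ^ k / κ) +
              2 * ENNReal.ofReal ((16 : ℝ)⁻¹ ^ k / κ) :=
              add_le_add (add_le_add (mul_le_mul_right c1 _) c2) (mul_le_mul_right c3 _)
          _ = K0 * ENNReal.ofReal ((16 : ℝ)⁻¹ ^ k / κ) := by rw [hK0def]; ring
      have hb3 : K0 * ENNReal.ofReal ((16 : ℝ)⁻¹ ^ k / κ) ≤
          ENNReal.ofReal ((16 : ℝ)⁻¹ ^ k) := by
        refine le_trans (mul_le_mul_left hK0κ _) ?_
        rw [← ENNReal.ofReal_mul hκpos.le]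
        refine ENNReal.ofReal_le_ofReal (le_of_eq ?_)
        rw [mul_comm, div_mul_cancel₀ _ hκpos.ne']
      have := le_trans hb2 hb3
      simpa [Pi.sub_apply] using this
    choose M hM using hfast
    set φ : ℕ → ℕ := fun k => Nat.rec (M 0) (fun k ih => max (ih + 1) (M (k + 1))) k with hφdef
    have hφsucc : ∀ k, φ (k + 1) = max (φ k + 1) (M (k + 1)) := fun k => rfl
    have hφmono : StrictMono φ := strictMono_nat_of_lt_succ fun k => by
      rw [hφsucc]
      exact lt_of_lt_of_le (Nat.lt_succ_self _) (le_max_left _ _)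
    have hφM : ∀ k, M k ≤ φ k := fun k => by
      cases k with
      | zero => exact le_refl _
      | succ k => rw [hφsucc]; exact le_max_right _ _
    have hcons : ∀ k : ℕ, (∫⁻ x, ENNReal.ofReal ((useq (φ (k + 1)) x - useq (φ k) x) ^ 2) ∂ν) ≤
        ENNReal.ofReal ((16 : ℝ)⁻¹ ^ k) := fun k =>
      hM k (φ (k + 1)) (le_trans (hφM k) (hφmono.monotone (Nat.le_succ k))) (φ k) (hφM k)
    have haeν : ∀ᵐ x ∂ν, ∃ l : ℝ, Tendsto (fun k => useq (φ k) x) atTop (𝓝 l) :=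
      ae_tendsto_of_fast_cauchy (fun k => (humeas (φ k)).aemeasurable) hcons
    obtain ⟨u, hum, hu_tendsto⟩ := measurable_limit_of_tendsto_metrizable_ae
      (fun k => (humeas (φ k)).aemeasurable) haeν
    obtain ⟨E, hEsub, hEm, hEnull⟩ := exists_measurable_superset_of_null (ae_iff.1 hu_tendsto)
    have htend : ∀ x, x ∉ E → Tendsto (fun k => useq (φ k) x) atTop (𝓝 (u x)) := by
      intro x hx
      by_contra hcon
      exact hx (hEsub hcon)
    have hEsplit : volume.restrict Ω E = 0 ∧ μ2 E = 0 ∧ μ4 E = 0 := by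
      have h0 : volume.restrict Ω E + μ2 E + μ4 E = 0 := by
        rw [hνdef] at hEnull
        simpa [Measure.add_apply] using hEnull
      exact ⟨(add_eq_zero.1 (add_eq_zero.1 h0).1).1,
        (add_eq_zero.1 (add_eq_zero.1 h0).1).2, (add_eq_zero.1 h0).2⟩
    obtain ⟨hE1, hE2, hE4⟩ := hEsplit
    have hEc : volume.restrict Ωᶜ E = 0 ∨ volume Ω = 0 := by
      rcases Ω.eq_empty_or_nonempty with hΩe | hΩn
      · right; rw [hΩe]; exact measure_empty
      · left
        have h1 : μ4 E = ∫⁻ y in E, W y ∂(volume.restrict Ωᶜ) := withDensity_apply W hEm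
        have h2 : (∫⁻ y in E, W y ∂(volume.restrict Ωᶜ)) = 0 := h1 ▸ hE4
        have h3 := (lintegral_eq_zero_iff hWm).1 h2
        have h4 : ((volume.restrict Ωᶜ).restrict E) {y | ¬ W y = 0} = 0 := ae_iff.1 h3
        have h5 : {y : RN N | ¬ W y = 0} = Set.univ :=
          Set.eq_univ_of_forall fun y => hWpos hΩn y
        rw [h5, Measure.restrict_apply_univ] at h4
        exact h4
    have haeΩ : ∀ᵐ x ∂(volume.restrict Ω),
        Tendsto (fun k => useq (φ k) x) atTop (𝓝 (u x)) := by
      rw [ae_iff]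
      refine measure_mono_null (fun x hx => ?_) hE1
      by_contra hxE
      exact hx (htend x hxE)
    have haeμ2 : ∀ᵐ x ∂μ2, Tendsto (fun k => useq (φ k) x) atTop (𝓝 (u x)) := by
      rw [ae_iff]
      refine measure_mono_null (fun x hx => ?_) hE2
      by_contra hxE
      exact hx (htend x hxE)
    have hz1 : volume (E ∩ Ω) = 0 := by
      have := hE1
      rwa [Measure.restrict_apply' hΩm] at this
    have hz2 : volume (E ∩ Ωᶜ) = 0 ∨ volume Ω = 0 := by
      rcases hEc with h | h
      · left
        rwa [Measure.restrict_apply' hΩm.compl] at h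
      · right; exact h
    have haeμ3 : ∀ᵐ p ∂μ3, Tendsto (fun k => useq (φ k) p.1 - useq (φ k) p.2) atTop
        (𝓝 (u p.1 - u p.2)) := by
      rw [ae_iff]
      have hsubbad : {p : RN N × RN N |
          ¬ Tendsto (fun k => useq (φ k) p.1 - useq (φ k) p.2) atTop (𝓝 (u p.1 - u p.2))} ⊆
          (E ×ˢ (Set.univ : Set (RN N))) ∪ ((Set.univ : Set (RN N)) ×ˢ E) := by
        intro p hp
        by_contra hcon
        simp only [Set.mem_union, not_or, Set.mem_prod, Set.mem_univ, and_true, true_and] at hcon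
        exact hp ((htend _ hcon.1).sub (htend _ hcon.2))
      refine measure_mono_null hsubbad ?_
      refine (withDensity_absolutelyContinuous _ _) ?_
      rw [Measure.restrict_apply' hQm]
      have hsplit : ((E ×ˢ (Set.univ : Set (RN N)) ∪ (Set.univ : Set (RN N)) ×ˢ E) ∩ QSet Ω) ⊆
          (((E ∩ Ω) ×ˢ (Set.univ : Set (RN N))) ∪ ((E ∩ Ωᶜ) ×ˢ Ω)) ∪
          (((Set.univ : Set (RN N)) ×ˢ (E ∩ Ω)) ∪ (Ω ×ˢ (E ∩ Ωᶜ))) := by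
        rintro p ⟨hp1 | hp2, hpQ⟩
        · by_cases h1 : p.1 ∈ Ω
          · exact Or.inl (Or.inl ⟨⟨hp1.1, h1⟩, trivial⟩)
          · have h2 : p.2 ∈ Ω := by
              by_contra h2
              exact hpQ ⟨h1, h2⟩
            exact Or.inl (Or.inr ⟨⟨hp1.1, h1⟩, h2⟩)
        · by_cases h1 : p.2 ∈ Ω
          · exact Or.inr (Or.inl ⟨trivial, hp2.2, h1⟩)
          · have h2 : p.1 ∈ Ω := by
              by_contra h2
              exact hpQ ⟨h2, h1⟩
            exact Or.inr (Or.inr ⟨h2, hp2.2, h1⟩)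
      refine measure_mono_null hsplit ?_
      have hprod_vol : (volume : Measure (RN N × RN N)) = volume.prod volume := rfl
      refine measure_union_null (measure_union_null ?_ ?_) (measure_union_null ?_ ?_)
      · rw [hprod_vol, Measure.prod_prod, hz1, zero_mul]
      · rcases hz2 with h | h
        · rw [hprod_vol, Measure.prod_prod, h, zero_mul]
        · rw [hprod_vol, Measure.prod_prod, h, mul_zero]
      · rw [hprod_vol, Measure.prod_prod, hz1, mul_zero]
      · rcases hz2 with h | h
        · rw [hprod_vol, Measure.prod_prod, h, mul_zero]
        · rw [hprod_vol, Measure.prod_prod, h, zero_mul]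
    -- Fatou for each component
    have hμ1F := fatou_cauchy (μ := volume.restrict Ω) hφmono
      (fun n => (humeas n).aemeasurable) haeΩ (by
        intro ε hε
        obtain ⟨M', h'⟩ := hcauchy' ε hε
        exact ⟨M', fun m hm n hn => by simpa [Pi.sub_apply] using (h' m hm n hn).1⟩)
    have hμ2F := fatou_cauchy (μ := μ2) hφmono
      (fun n => (humeas n).aemeasurable) haeμ2 (by
        intro ε hε
        obtain ⟨M', h'⟩ := hcauchy' ε hε
        refine ⟨M', fun m hm n hn => ?_⟩
        have hc2 := (h' m hm n hn).2.1
        have e := mu2_lintegral (d := useq m - useq n) hgm ((humeas m).sub (humeas n))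
        simp only [Pi.sub_apply] at e hc2
        rw [e]
        exact hc2)
    have hμ3F := fatou_cauchy (μ := μ3) (f := fun n => fun p : RN N × RN N =>
        useq n p.1 - useq n p.2) (u := fun p : RN N × RN N => u p.1 - u p.2) hφmono
      (fun n => (((humeas n).comp measurable_fst).sub
        ((humeas n).comp measurable_snd)).aemeasurable) haeμ3 (by
        intro ε hε
        obtain ⟨M', h'⟩ := hcauchy' ε hε
        refine ⟨M', fun m hm n hn => ?_⟩
        have hc3 := (h' m hm n hn).2.2
        have e := mu3_lintegral (Ω := Ω) (d := useq m - useq n) hs0.le ((humeas m).sub (humeas n))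
        show (∫⁻ p : RN N × RN N, ENNReal.ofReal (((useq m p.1 - useq m p.2) -
          (useq n p.1 - useq n p.2)) ^ 2) ∂μ3) ≤ ENNReal.ofReal ε
        have e2 : (∫⁻ p : RN N × RN N, ENNReal.ofReal (((useq m p.1 - useq m p.2) -
            (useq n p.1 - useq n p.2)) ^ 2) ∂μ3) = gagE N s (QSet Ω) (useq m - useq n) := by
          rw [← e]
          refine lintegral_congr fun p => ?_
          simp only [Pi.sub_apply]
          ring_nf
        rw [e2]
        exact hc3)
    -- convergence of components for the full sequence
    have hConv1 : ∀ ε : ℝ, 0 < ε → ∃ M' : ℕ, ∀ n, M' ≤ n →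
        (∫⁻ x in Ω, ENNReal.ofReal (((useq n - u) x) ^ 2)) ≤ ENNReal.ofReal ε := by
      intro ε hε
      obtain ⟨M', h'⟩ := hμ1F ε hε
      exact ⟨M', fun n hn => by simpa [Pi.sub_apply] using h' n hn⟩
    have hConv2 : ∀ ε : ℝ, 0 < ε → ∃ M' : ℕ, ∀ n, M' ≤ n →
        (∫⁻ x in Ωᶜ, ENNReal.ofReal (|g x| * ((useq n - u) x) ^ 2)) ≤ ENNReal.ofReal ε := by
      intro ε hε
      obtain ⟨M', h'⟩ := hμ2F ε hε
      refine ⟨M', fun n hn => ?_⟩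
      have hb := h' n hn
      have e := mu2_lintegral (d := useq n - u) hgm ((humeas n).sub hum)
      simp only [Pi.sub_apply] at e hb ⊢
      rw [← e]
      exact hb
    have hConv3 : ∀ ε : ℝ, 0 < ε → ∃ M' : ℕ, ∀ n, M' ≤ n →
        gagE N s (QSet Ω) (useq n - u) ≤ ENNReal.ofReal ε := by
      intro ε hε
      obtain ⟨M', h'⟩ := hμ3F ε hε
      refine ⟨M', fun n hn => ?_⟩
      have hb := h' n hn
      have e := mu3_lintegral (Ω := Ω) (d := useq n - u) hs0.le ((humeas n).sub hum)
      have e2 : (∫⁻ p : RN N × RN N, ENNReal.ofReal (((useq n p.1 - useq n p.2) -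
          (u p.1 - u p.2)) ^ 2) ∂μ3) = gagE N s (QSet Ω) (useq n - u) := by
        rw [← e]
        refine lintegral_congr fun p => ?_
        simp only [Pi.sub_apply]
        ring_nf
      rw [← e2]
      exact hb
    -- the limit is in the space
    have hmemu : MemWg N s Ω g u := by
      obtain ⟨M1, h1⟩ := hConv1 1 one_pos
      obtain ⟨M2, h2⟩ := hConv2 1 one_pos
      obtain ⟨M3, h3⟩ := hConv3 1 one_pos
      set n₀ : ℕ := max M1 (max M2 M3) with hn₀def
      have k1 := h1 n₀ (le_max_left _ _)
      have k2 := h2 n₀ (le_trans (le_max_left _ _) (le_max_right _ _))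
      have k3 := h3 n₀ (le_trans (le_max_right _ _) (le_max_right _ _))
      have hd0m : Measurable (useq n₀ - u) := (humeas n₀).sub hum
      refine ⟨hum, ?_, ?_, ?_⟩
      · have hb := lintegral_weight_sq_sub_le (μ := volume.restrict Ω)
          (W := fun _ => (1 : ℝ≥0∞)) aemeasurable_const (humeas n₀).aemeasurable
          hd0m.aemeasurable
        simp only [one_mul] at hb
        calc (∫⁻ x in Ω, ENNReal.ofReal ((u x) ^ 2))
            = ∫⁻ x in Ω, ENNReal.ofReal ((useq n₀ x - (useq n₀ - u) x) ^ 2) := by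
              refine lintegral_congr fun x => ?_
              rw [show useq n₀ x - (useq n₀ - u) x = u x from by
                simp only [Pi.sub_apply]; ring]
          _ ≤ 2 * (∫⁻ x in Ω, ENNReal.ofReal (useq n₀ x ^ 2)) +
              2 * ∫⁻ x in Ω, ENNReal.ofReal (((useq n₀ - u) x) ^ 2) := hb
          _ < ⊤ := ENNReal.add_lt_top.2
              ⟨ENNReal.mul_lt_top (by norm_num) (hmem n₀).2.1,
               ENNReal.mul_lt_top (by norm_num)
                 (lt_of_le_of_lt k1 ENNReal.ofReal_lt_top)⟩
      · have habs : AEMeasurable (fun x => ENNReal.ofReal |g x|) (volume.restrict Ωᶜ) :=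
          ENNReal.measurable_ofReal.comp_aemeasurable
            (by simpa [Real.norm_eq_abs] using hgm.norm)
        have hrw : ∀ w : RN N → ℝ, (∫⁻ x in Ωᶜ, ENNReal.ofReal (|g x| * w x ^ 2)) =
            ∫⁻ x in Ωᶜ, ENNReal.ofReal |g x| * ENNReal.ofReal (w x ^ 2) := fun w =>
          lintegral_congr fun x => ENNReal.ofReal_mul (abs_nonneg _)
        have hb := lintegral_weight_sq_sub_le (μ := volume.restrict Ωᶜ)
          (W := fun x => ENNReal.ofReal |g x|) habs (humeas n₀).aemeasurable
          hd0m.aemeasurable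
        calc (∫⁻ x in Ωᶜ, ENNReal.ofReal (|g x| * (u x) ^ 2))
            = ∫⁻ x in Ωᶜ, ENNReal.ofReal |g x| *
                ENNReal.ofReal ((useq n₀ x - (useq n₀ - u) x) ^ 2) := by
              rw [hrw u]
              refine lintegral_congr fun x => ?_
              rw [show useq n₀ x - (useq n₀ - u) x = u x from by
                simp only [Pi.sub_apply]; ring]
          _ ≤ 2 * (∫⁻ x in Ωᶜ, ENNReal.ofReal |g x| * ENNReal.ofReal (useq n₀ x ^ 2)) +
              2 * ∫⁻ x in Ωᶜ, ENNReal.ofReal |g x| *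
                ENNReal.ofReal (((useq n₀ - u) x) ^ 2) := hb
          _ = 2 * (∫⁻ x in Ωᶜ, ENNReal.ofReal (|g x| * useq n₀ x ^ 2)) +
              2 * ∫⁻ x in Ωᶜ, ENNReal.ofReal (|g x| * ((useq n₀ - u) x) ^ 2) := by
              rw [hrw (useq n₀), hrw (useq n₀ - u)]
          _ < ⊤ := ENNReal.add_lt_top.2
              ⟨ENNReal.mul_lt_top (by norm_num) (hmem n₀).2.2.1,
               ENNReal.mul_lt_top (by norm_num)
                 (lt_of_le_of_lt k2 ENNReal.ofReal_lt_top)⟩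
      · have hWq : AEMeasurable (fun p : RN N × RN N => ENNReal.ofReal (Kden N s p.1 p.2)⁻¹)
            ((volume : Measure (RN N × RN N)).restrict (QSet Ω)) :=
          ((measurable_Kden N hs0.le).inv.ennreal_ofReal).aemeasurable
        have hrwG : ∀ w : RN N → ℝ, gagE N s (QSet Ω) w =
            ∫⁻ p in QSet Ω, ENNReal.ofReal (Kden N s p.1 p.2)⁻¹ *
              ENNReal.ofReal ((w p.1 - w p.2) ^ 2) := fun w =>
          lintegral_congr fun p => ofReal_div_K N s _ _ _
        have hf1 : AEMeasurable (fun p : RN N × RN N => useq n₀ p.1 - useq n₀ p.2)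
            ((volume : Measure (RN N × RN N)).restrict (QSet Ω)) :=
          (((humeas n₀).comp measurable_fst).sub ((humeas n₀).comp measurable_snd)).aemeasurable
        have hf2 : AEMeasurable (fun p : RN N × RN N =>
            (useq n₀ p.1 - useq n₀ p.2) - (u p.1 - u p.2))
            ((volume : Measure (RN N × RN N)).restrict (QSet Ω)) :=
          hf1.sub (((hum.comp measurable_fst).sub ((hum.comp measurable_snd))).aemeasurable)
        have hb := lintegral_weight_sq_sub_le
          (μ := (volume : Measure (RN N × RN N)).restrict (QSet Ω))
          (W := fun p : RN N × RN N => ENNReal.ofReal (Kden N s p.1 p.2)⁻¹)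
          hWq hf1 hf2
        calc gagE N s (QSet Ω) u
            = ∫⁻ p in QSet Ω, ENNReal.ofReal (Kden N s p.1 p.2)⁻¹ *
                ENNReal.ofReal (((useq n₀ p.1 - useq n₀ p.2) -
                  ((useq n₀ p.1 - useq n₀ p.2) - (u p.1 - u p.2))) ^ 2) := by
              rw [hrwG u]
              refine lintegral_congr fun p => ?_
              rw [show (useq n₀ p.1 - useq n₀ p.2) -
                ((useq n₀ p.1 - useq n₀ p.2) - (u p.1 - u p.2)) = u p.1 - u p.2 from by ring]
          _ ≤ 2 * (∫⁻ p in QSet Ω, ENNReal.ofReal (Kden N s p.1 p.2)⁻¹ *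
                ENNReal.ofReal ((useq n₀ p.1 - useq n₀ p.2) ^ 2)) +
              2 * ∫⁻ p in QSet Ω, ENNReal.ofReal (Kden N s p.1 p.2)⁻¹ *
                ENNReal.ofReal (((useq n₀ p.1 - useq n₀ p.2) - (u p.1 - u p.2)) ^ 2) := hb
          _ = 2 * gagE N s (QSet Ω) (useq n₀) + 2 * gagE N s (QSet Ω) (useq n₀ - u) := by
              rw [hrwG (useq n₀), hrwG (useq n₀ - u)]
              congr 2
              refine lintegral_congr fun p => ?_
              congr 2
              simp only [Pi.sub_apply]
              ring
          _ < ⊤ := ENNReal.add_lt_top.2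
              ⟨ENNReal.mul_lt_top (by norm_num) (hmem n₀).2.2.2,
               ENNReal.mul_lt_top (by norm_num)
                 (lt_of_le_of_lt k3 ENNReal.ofReal_lt_top)⟩
    refine ⟨u, hmemu, ?_⟩
    rw [Metric.tendsto_atTop]
    intro ε hε
    have hε3 : 0 < ε ^ 2 / 4 := by positivity
    obtain ⟨M1, h1⟩ := hConv1 _ hε3
    obtain ⟨M2, h2⟩ := hConv2 _ hε3
    obtain ⟨M3, h3⟩ := hConv3 _ hε3
    refine ⟨max M1 (max M2 M3), fun n hn => ?_⟩
    have hn1 : M1 ≤ n := le_trans (le_max_left _ _) hn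
    have hn2 : M2 ≤ n := le_trans (le_trans (le_max_left _ _) (le_max_right _ _)) hn
    have hn3 : M3 ≤ n := le_trans (le_trans (le_max_right _ _) (le_max_right _ _)) hn
    have hWn : WgNormSq N s Ω g (useq n - u) ≤ 3 * (ε ^ 2 / 4) := by
      rw [wgNormSq_eq (u := useq n - u) hgsm ((humeas n).sub hum)]
      have b1 : (∫⁻ x in Ω, ENNReal.ofReal (((useq n - u) x) ^ 2)).toReal ≤ ε ^ 2 / 4 :=
        ENNReal.toReal_le_of_le_ofReal hε3.le (h1 n hn1)
      have b2 : (∫⁻ x in Ωᶜ, ENNReal.ofReal (|g x| * ((useq n - u) x) ^ 2)).toReal ≤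
          ε ^ 2 / 4 := ENNReal.toReal_le_of_le_ofReal hε3.le (h2 n hn2)
      have b3 : (gagE N s (QSet Ω) (useq n - u)).toReal ≤ ε ^ 2 / 4 :=
        ENNReal.toReal_le_of_le_ofReal hε3.le (h3 n hn3)
      linarith
    rw [Real.dist_eq, sub_zero, abs_of_nonneg (Real.sqrt_nonneg _)]
    refine lt_of_le_of_lt (Real.sqrt_le_sqrt hWn) ?_
    have hlt : 3 * (ε ^ 2 / 4) < ε ^ 2 := by nlinarith
    calc Real.sqrt (3 * (ε ^ 2 / 4)) < Real.sqrt (ε ^ 2) :=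
        Real.sqrt_lt_sqrt (by positivity) hlt
      _ = ε := Real.sqrt_sq hε.le
end
end

section
/- Let Ω ⊂ ℝ^N be a bounded open set with Lipschitz continuous boundary and let κ satisfy Assumption (A). Then there exist constants c > 0 and C > 0 such that for every measurable u : ℝ^N → ℝ with ‖u‖_{W^{s,2}_{Ω,κ}} < ∞ and u|_{ℝ^N∖Ω} ∈ L²(ℝ^N∖Ω), one has c (‖u‖²_{W^{s,2}_{Ω,κ}} + ‖u‖²_{L²(ℝ^N∖Ω)}) ≤ ∬_Q |u(x)−u(y)|²/|x−y|^{N+2s} dx dy + ∫_{ℝ^N∖Ω} u² dx ≤ C (‖u‖²_{W^{s,2}_{Ω,κ}} + ‖u‖²_{L²(ℝ^N∖Ω)}); that is, ‖u‖_W := (∬_Q |u(x)−u(y)|²/|x−y|^{N+2s} dx dy + ∫_{ℝ^N∖Ω} u² dx)^{1/2} defines an equivalent norm on W^{s,2}_{Ω,κ} ∩ L²(ℝ^N∖Ω). -/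
open MeasureTheory Set Filter Topology
open scoped ENNReal

noncomputable section

/-- The Gagliardo kernel as an `ℝ≥0∞`-valued function on the product space. -/
def gker (N : ℕ) (s : ℝ) (u : RN N → ℝ) : RN N × RN N → ℝ≥0∞ :=
  fun p => ENNReal.ofReal ((u p.1 - u p.2) ^ 2 / Kden N s p.1 p.2)

lemma gagE_eq_gker (N : ℕ) (s : ℝ) (A : Set (RN N × RN N)) (u : RN N → ℝ) :
    gagE N s A u = ∫⁻ p in A, gker N s u p := rfl

lemma gker_meas (N : ℕ) (s : ℝ) {u : RN N → ℝ} (hu : Measurable u) :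
    Measurable (gker N s u) := by
  apply Measurable.ennreal_ofReal
  apply Measurable.div
  · exact ((hu.comp measurable_fst).sub (hu.comp measurable_snd)).pow_const 2
  · exact ((measurable_fst.sub measurable_snd).norm).pow_const _

/-- Under Assumption (A), the quantity
`‖u‖_W² = ∬_Q |u(x)−u(y)|²/|x−y|^{N+2s} dx dy + ∫_{ℝ^N∖Ω} u² dx` defines an equivalent
norm on `W^{s,2}_{Ω,κ} ∩ L²(ℝ^N∖Ω)`. -/
theorem statement15 (N : ℕ) (hN : 1 ≤ N) (s : ℝ) (hs0 : 0 < s) (hs1 : s < 1)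
    (Ω : Set (RN N)) (hΩo : IsOpen Ω) (hΩb : Bornology.IsBounded Ω)
    (hΩl : HasLipschitzBoundary Ω)
    (κ : RN N → ℝ) (hκ : AssumpA Ω κ) :
    ∃ c C : ℝ, 0 < c ∧ 0 < C ∧
      ∀ u : RN N → ℝ, MemWg N s Ω κ u →
        (∫⁻ x in Ωᶜ, ENNReal.ofReal ((u x) ^ 2)) < ⊤ →
        c * (WgNormSq N s Ω κ u + ∫ x in Ωᶜ, (u x) ^ 2) ≤
            (gagE N s (QSet Ω) u).toReal + ∫ x in Ωᶜ, (u x) ^ 2 ∧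
          (gagE N s (QSet Ω) u).toReal + ∫ x in Ωᶜ, (u x) ^ 2 ≤
            C * (WgNormSq N s Ω κ u + ∫ x in Ωᶜ, (u x) ^ 2) := by
  classical
  -- Geometry: choose a ball `B ⊆ Ωᶜ` close to `Ω`.
  obtain ⟨R0, hR0⟩ := hΩb.subset_ball 0
  have hR1 : (1:ℝ) ≤ max R0 1 := le_max_right _ _
  set R : ℝ := max R0 1 with hRdef
  have hΩR : Ω ⊆ Metric.ball 0 R := hR0.trans (Metric.ball_subset_ball (le_max_left _ _))
  haveI : Nonempty (Fin N) := ⟨⟨0, hN⟩⟩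
  obtain ⟨p, hp⟩ := exists_norm_eq (RN N) (show (0:ℝ) ≤ R + 2 by linarith)
  have hBΩ : Metric.ball p 1 ⊆ Ωᶜ := by
    intro y hy hyΩ
    have h1 : ‖y‖ < R := by simpa [Metric.mem_ball, dist_zero_right] using hΩR hyΩ
    have h2 : ‖y - p‖ < 1 := by simpa [Metric.mem_ball, dist_eq_norm] using hy
    have h3 : ‖p‖ ≤ ‖p - y‖ + ‖y‖ := by
      simpa using norm_add_le (p - y) y
    rw [norm_sub_rev] at h3
    rw [hp] at h3
    linarith
  have hvB0 : volume (Metric.ball p 1) ≠ 0 :=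
    (Metric.measure_ball_pos volume p one_pos).ne'
  have hvBt : volume (Metric.ball p 1) ≠ ⊤ := measure_ball_lt_top.ne
  have hvOt : volume Ω ≠ ⊤ := hΩb.measure_lt_top.ne
  -- Constants
  have hpe : (0:ℝ) ≤ (N:ℝ) + 2 * s := by positivity
  have hD : (0:ℝ) < 2 * R + 3 := by linarith
  obtain ⟨Cb, hCb⟩ := hκ.memLinfty
  set c1 : ℝ≥0∞ := ENNReal.ofReal (2 * (2 * R + 3) ^ ((N:ℝ) + 2 * s)) with hc1
  set γ : ℝ≥0∞ := ENNReal.ofReal (max Cb 0) with hγ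
  set M : ℝ≥0∞ := c1 + 2 * volume Ω + volume (Metric.ball p 1) * γ
      + volume (Metric.ball p 1) with hM
  have hMt : M ≠ ⊤ := by
    refine ENNReal.add_ne_top.2 ⟨ENNReal.add_ne_top.2 ⟨ENNReal.add_ne_top.2
      ⟨ENNReal.ofReal_ne_top, ?_⟩, ?_⟩, hvBt⟩
    · exact ENNReal.mul_ne_top (by simp) hvOt
    · exact ENNReal.mul_ne_top hvBt ENNReal.ofReal_ne_top
  have hb : 0 < (volume (Metric.ball p 1)).toReal := ENNReal.toReal_pos hvB0 hvBt
  have hm : (0:ℝ) < max M.toReal 1 := lt_of_lt_of_le one_pos (le_max_right _ _)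
  refine ⟨(volume (Metric.ball p 1)).toReal / max M.toReal 1, 1, div_pos hb hm, one_pos, ?_⟩
  intro u hu hEfin
  obtain ⟨hum, hIA, hIK, hIG⟩ := hu
  have hf : Measurable (gker N s u) := gker_meas N s hum
  have hu2 : Measurable fun x : RN N => ENNReal.ofReal ((u x) ^ 2) :=
    (hum.pow_const 2).ennreal_ofReal
  rw [gagE_eq_gker] at hIG
  -- Pointwise Poincaré-type bound
  have hpt : ∀ x ∈ Ω, ∀ y ∈ Metric.ball p 1, ENNReal.ofReal ((u x) ^ 2)
      ≤ c1 * gker N s u (x, y) + 2 * ENNReal.ofReal ((u y) ^ 2) := by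
    intro x hx y hy
    have hxy : x ≠ y := fun h => (hBΩ hy) (h ▸ hx)
    have hn : 0 < ‖x - y‖ := norm_sub_pos_iff.2 hxy
    have hxR : ‖x‖ < R := by simpa [Metric.mem_ball, dist_zero_right] using hΩR hx
    have hyP : ‖y - p‖ < 1 := by simpa [Metric.mem_ball, dist_eq_norm] using hy
    have hyn : ‖y‖ ≤ R + 3 := by
      have h4 : ‖y‖ ≤ ‖y - p‖ + ‖p‖ := by simpa using norm_add_le (y - p) p
      rw [hp] at h4; linarith
    have hle : ‖x - y‖ ≤ 2 * R + 3 := by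
      have := norm_sub_le x y; linarith
    have hK : 0 < Kden N s x y := Real.rpow_pos_of_pos hn _
    have hKle : Kden N s x y ≤ (2 * R + 3) ^ ((N:ℝ) + 2 * s) :=
      Real.rpow_le_rpow (norm_nonneg _) hle hpe
    have hq0 : 0 ≤ (u x - u y) ^ 2 / Kden N s x y := div_nonneg (sq_nonneg _) hK.le
    have hDp : (0:ℝ) < (2 * R + 3) ^ ((N:ℝ) + 2 * s) := Real.rpow_pos_of_pos hD _
    have hreal : (u x) ^ 2 ≤ 2 * (2 * R + 3) ^ ((N:ℝ) + 2 * s) *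
        ((u x - u y) ^ 2 / Kden N s x y) + 2 * (u y) ^ 2 := by
      have h1 : (u x) ^ 2 ≤ 2 * (u x - u y) ^ 2 + 2 * (u y) ^ 2 := by
        nlinarith [sq_nonneg (u x - 2 * u y)]
      have h2 : (u x - u y) ^ 2 = ((u x - u y) ^ 2 / Kden N s x y) * Kden N s x y := by
        field_simp
      have h3 : ((u x - u y) ^ 2 / Kden N s x y) * Kden N s x y ≤
          ((u x - u y) ^ 2 / Kden N s x y) * ((2 * R + 3) ^ ((N:ℝ) + 2 * s)) :=
        mul_le_mul_of_nonneg_left hKle hq0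
      nlinarith
    calc ENNReal.ofReal ((u x) ^ 2)
        ≤ ENNReal.ofReal (2 * (2 * R + 3) ^ ((N:ℝ) + 2 * s) *
            ((u x - u y) ^ 2 / Kden N s x y) + 2 * (u y) ^ 2) :=
          ENNReal.ofReal_le_ofReal hreal
      _ = ENNReal.ofReal (2 * (2 * R + 3) ^ ((N:ℝ) + 2 * s) *
            ((u x - u y) ^ 2 / Kden N s x y)) + ENNReal.ofReal (2 * (u y) ^ 2) :=
          ENNReal.ofReal_add (by positivity) (by positivity)
      _ = c1 * gker N s u (x, y) + 2 * ENNReal.ofReal ((u y) ^ 2) := by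
          have e1 : ENNReal.ofReal (2 * (2 * R + 3) ^ ((N:ℝ) + 2 * s) *
              ((u x - u y) ^ 2 / Kden N s x y)) = c1 * gker N s u (x, y) := by
            rw [hc1]
            exact ENNReal.ofReal_mul (by positivity)
          have e2 : ENNReal.ofReal (2 * (u y) ^ 2) = 2 * ENNReal.ofReal ((u y) ^ 2) := by
            rw [ENNReal.ofReal_mul (by norm_num : (0:ℝ) ≤ 2)]
            norm_num
          rw [e1, e2]
  -- Integrate in `y` over the ball
  have hfx : ∀ x : RN N, Measurable fun y => gker N s u (x, y) :=
    fun x => hf.comp measurable_prodMk_left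
  have step1 : ∀ x ∈ Ω, volume (Metric.ball p 1) * ENNReal.ofReal ((u x) ^ 2)
      ≤ c1 * (∫⁻ y in Metric.ball p 1, gker N s u (x, y))
        + 2 * ∫⁻ z in Ωᶜ, ENNReal.ofReal ((u z) ^ 2) := by
    intro x hx
    have h1 : volume (Metric.ball p 1) * ENNReal.ofReal ((u x) ^ 2)
        = ∫⁻ _ in Metric.ball p 1, ENNReal.ofReal ((u x) ^ 2) := by
      rw [setLIntegral_const, mul_comm]
    rw [h1]
    calc ∫⁻ _ in Metric.ball p 1, ENNReal.ofReal ((u x) ^ 2)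
        ≤ ∫⁻ y in Metric.ball p 1,
            (c1 * gker N s u (x, y) + 2 * ENNReal.ofReal ((u y) ^ 2)) := by
          exact setLIntegral_mono (((hfx x).const_mul c1).add (hu2.const_mul 2))
            (fun y hy => hpt x hx y hy)
      _ = c1 * (∫⁻ y in Metric.ball p 1, gker N s u (x, y))
          + 2 * ∫⁻ y in Metric.ball p 1, ENNReal.ofReal ((u y) ^ 2) := by
          rw [lintegral_add_left ((hfx x).const_mul c1),
            lintegral_const_mul _ (hfx x), lintegral_const_mul _ hu2]
      _ ≤ c1 * (∫⁻ y in Metric.ball p 1, gker N s u (x, y))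
          + 2 * ∫⁻ z in Ωᶜ, ENNReal.ofReal ((u z) ^ 2) := by
          gcongr
  -- The double integral is bounded by the Gagliardo seminorm over `Q`
  have hG : Measurable fun x => ∫⁻ y in Metric.ball p 1, gker N s u (x, y) :=
    Measurable.lintegral_prod_right (f := fun x y => gker N s u (x, y)) hf
  have hprod : ∫⁻ x in Ω, ∫⁻ y in Metric.ball p 1, gker N s u (x, y)
      ≤ ∫⁻ q in QSet Ω, gker N s u q := by
    have hsub : Ω ×ˢ Metric.ball p 1 ⊆ QSet Ω := by
      rintro ⟨x, y⟩ ⟨hx, -⟩ hmem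
      exact hmem.1 hx
    have h1 : ∫⁻ q in Ω ×ˢ Metric.ball p 1, gker N s u q
        = ∫⁻ x in Ω, ∫⁻ y in Metric.ball p 1, gker N s u (x, y) := by
      rw [Measure.volume_eq_prod, ← Measure.prod_restrict]
      exact lintegral_prod _ hf.aemeasurable
    rw [← h1]
    exact lintegral_mono_set hsub
  -- Integrate in `x` over `Ω`
  have hIAb : (volume (Metric.ball p 1) * ∫⁻ x in Ω, ENNReal.ofReal ((u x) ^ 2))
      ≤ c1 * (∫⁻ q in QSet Ω, gker N s u q)
        + 2 * volume Ω * ∫⁻ z in Ωᶜ, ENNReal.ofReal ((u z) ^ 2) := by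
    calc volume (Metric.ball p 1) * ∫⁻ x in Ω, ENNReal.ofReal ((u x) ^ 2)
        = ∫⁻ x in Ω, volume (Metric.ball p 1) * ENNReal.ofReal ((u x) ^ 2) := by
          rw [lintegral_const_mul _ hu2]
      _ ≤ ∫⁻ x in Ω, (c1 * (∫⁻ y in Metric.ball p 1, gker N s u (x, y))
            + 2 * ∫⁻ z in Ωᶜ, ENNReal.ofReal ((u z) ^ 2)) :=
          setLIntegral_mono ((hG.const_mul c1).add measurable_const)
            (fun x hx => step1 x hx)
      _ = c1 * (∫⁻ x in Ω, ∫⁻ y in Metric.ball p 1, gker N s u (x, y))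
          + (2 * ∫⁻ z in Ωᶜ, ENNReal.ofReal ((u z) ^ 2)) * volume Ω := by
          rw [lintegral_add_left (hG.const_mul c1), lintegral_const_mul _ hG,
            setLIntegral_const]
      _ ≤ c1 * (∫⁻ q in QSet Ω, gker N s u q)
          + 2 * volume Ω * ∫⁻ z in Ωᶜ, ENNReal.ofReal ((u z) ^ 2) := by
          gcongr ?_ + ?_
          · exact mul_le_mul_right hprod c1
          · rw [mul_assoc, mul_comm (∫⁻ z in Ωᶜ, ENNReal.ofReal ((u z) ^ 2)) (volume Ω),
              ← mul_assoc]
  -- κ-term bound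
  have hIKb : (∫⁻ x in Ωᶜ, ENNReal.ofReal (|κ x| * (u x) ^ 2))
      ≤ γ * ∫⁻ x in Ωᶜ, ENNReal.ofReal ((u x) ^ 2) := by
    have hbnd : ∀ᵐ x ∂(volume.restrict Ωᶜ), ENNReal.ofReal (|κ x| * (u x) ^ 2)
        ≤ γ * ENNReal.ofReal ((u x) ^ 2) := by
      filter_upwards [hCb] with x hx
      rw [hγ, ← ENNReal.ofReal_mul (le_max_right Cb 0)]
      apply ENNReal.ofReal_le_ofReal
      have h1 : |κ x| = κ x := abs_of_nonneg (hκ.nonneg x)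
      have h2 : κ x ≤ max Cb 0 := le_trans hx (le_max_left _ _)
      rw [h1]
      nlinarith [sq_nonneg (u x)]
    calc (∫⁻ x in Ωᶜ, ENNReal.ofReal (|κ x| * (u x) ^ 2))
        ≤ ∫⁻ x in Ωᶜ, γ * ENNReal.ofReal ((u x) ^ 2) := lintegral_mono_ae hbnd
      _ = γ * ∫⁻ x in Ωᶜ, ENNReal.ofReal ((u x) ^ 2) := lintegral_const_mul _ hu2
  -- Abbreviations
  set IA : ℝ≥0∞ := ∫⁻ x in Ω, ENNReal.ofReal ((u x) ^ 2) with hIAdef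
  set IK : ℝ≥0∞ := ∫⁻ x in Ωᶜ, ENNReal.ofReal (|κ x| * (u x) ^ 2) with hIKdef
  set IE : ℝ≥0∞ := ∫⁻ x in Ωᶜ, ENNReal.ofReal ((u x) ^ 2) with hIEdef
  set IG : ℝ≥0∞ := ∫⁻ q in QSet Ω, gker N s u q with hIGdef
  -- Main ℝ≥0∞ estimate
  have key : volume (Metric.ball p 1) * (IA + IK + IG + IE) ≤ M * (IG + IE) := by
    have e1 : volume (Metric.ball p 1) * (IA + IK + IG + IE)
        = volume (Metric.ball p 1) * IA + volume (Metric.ball p 1) * IK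
          + volume (Metric.ball p 1) * IG + volume (Metric.ball p 1) * IE := by ring
    rw [e1]
    have e2 : M * (IG + IE) = (c1 * IG + 2 * volume Ω * IE
          + volume (Metric.ball p 1) * (γ * IE) + volume (Metric.ball p 1) * IG
          + volume (Metric.ball p 1) * IE)
        + (c1 * IE + 2 * volume Ω * IG + volume (Metric.ball p 1) * (γ * IG)) := by
      rw [hM]; ring
    rw [e2]
    refine le_trans ?_ le_self_add
    exact add_le_add (add_le_add (add_le_add hIAb (mul_le_mul_right hIKb _)) le_rfl) le_rfl
  -- Finiteness
  have hsumt : IA + IK + IG + IE ≠ ⊤ :=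
    ENNReal.add_ne_top.2 ⟨ENNReal.add_ne_top.2 ⟨ENNReal.add_ne_top.2
      ⟨hIA.ne, hIK.ne⟩, hIG.ne⟩, hEfin.ne⟩
  have hrhst : M * (IG + IE) ≠ ⊤ :=
    ENNReal.mul_ne_top hMt (ENNReal.add_ne_top.2 ⟨hIG.ne, hEfin.ne⟩)
  have hR2 : (volume (Metric.ball p 1)).toReal * (IA + IK + IG + IE).toReal
      ≤ M.toReal * (IG + IE).toReal := by
    rw [← ENNReal.toReal_mul, ← ENNReal.toReal_mul]
    exact ENNReal.toReal_mono hrhst key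
  have hsplit : (IA + IK + IG + IE).toReal
      = IA.toReal + IK.toReal + IG.toReal + IE.toReal := by
    rw [ENNReal.toReal_add (ENNReal.add_ne_top.2 ⟨ENNReal.add_ne_top.2
        ⟨hIA.ne, hIK.ne⟩, hIG.ne⟩) hEfin.ne,
      ENNReal.toReal_add (ENNReal.add_ne_top.2 ⟨hIA.ne, hIK.ne⟩) hIG.ne,
      ENNReal.toReal_add hIA.ne hIK.ne]
  have hsplit2 : (IG + IE).toReal = IG.toReal + IE.toReal :=
    ENNReal.toReal_add hIG.ne hEfin.ne
  -- Bochner integrals as `toReal` of lintegrals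
  have hA : ∫ x in Ω, (u x) ^ 2 = IA.toReal :=
    integral_eq_lintegral_of_nonneg_ae (ae_of_all _ fun x => sq_nonneg _)
      ((hum.pow_const 2).aestronglyMeasurable)
  have hKr : ∫ x in Ωᶜ, |κ x| * (u x) ^ 2 = IK.toReal :=
    integral_eq_lintegral_of_nonneg_ae
      (ae_of_all _ fun x => mul_nonneg (abs_nonneg _) (sq_nonneg _))
      ((hκ.meas.abs.mul (hum.pow_const 2)).aestronglyMeasurable)
  have hEr : ∫ x in Ωᶜ, (u x) ^ 2 = IE.toReal :=
    integral_eq_lintegral_of_nonneg_ae (ae_of_all _ fun x => sq_nonneg _)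
      ((hum.pow_const 2).aestronglyMeasurable)
  have hW : WgNormSq N s Ω κ u = IA.toReal + IK.toReal + IG.toReal := by
    rw [WgNormSq, hA, hKr, gagE_eq_gker, ← hIGdef]
  have hWG : (gagE N s (QSet Ω) u).toReal = IG.toReal := by
    rw [gagE_eq_gker, ← hIGdef]
  constructor
  · -- lower bound
    rw [hW, hEr, hWG]
    have h1 : (volume (Metric.ball p 1)).toReal
        * (IA.toReal + IK.toReal + IG.toReal + IE.toReal)
        ≤ max M.toReal 1 * (IG.toReal + IE.toReal) := by
      calc (volume (Metric.ball p 1)).toReal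
            * (IA.toReal + IK.toReal + IG.toReal + IE.toReal)
          = (volume (Metric.ball p 1)).toReal * (IA + IK + IG + IE).toReal := by
            rw [hsplit]
        _ ≤ M.toReal * (IG + IE).toReal := hR2
        _ = M.toReal * (IG.toReal + IE.toReal) := by rw [hsplit2]
        _ ≤ max M.toReal 1 * (IG.toReal + IE.toReal) := by
            apply mul_le_mul_of_nonneg_right (le_max_left _ _)
            positivity
    rw [div_mul_eq_mul_div, div_le_iff₀ hm]
    calc (volume (Metric.ball p 1)).toReal
          * (IA.toReal + IK.toReal + IG.toReal + IE.toReal)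
        ≤ max M.toReal 1 * (IG.toReal + IE.toReal) := h1
      _ = (IG.toReal + IE.toReal) * max M.toReal 1 := by ring
  · -- upper bound
    rw [hW, hEr, hWG, one_mul]
    have h1 : 0 ≤ IA.toReal := ENNReal.toReal_nonneg
    have h2 : 0 ≤ IK.toReal := ENNReal.toReal_nonneg
    linarith
end
end
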